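/- arXiv:0912.0668 — 2 statements merged into one kernel-verified Lean document; each statement's English description precedes it below -/
import Mathlib

section
/- Let f₀, f₁ ∈ PL₀(I) satisfy the relations [f₀f₁⁻¹, f₀⁻¹f₁f₀] = 1 and [f₀f₁⁻¹, f₀⁻²f₁f₀²] = 1. Let (a,c) be an orbital of f₀ on which f₀(x) > x, which is not an orbital of f₁ but which meets the support of f₁. Then there exists p < c such that f₀ and f₁ agree on the interval [p,c]; in particular, the largest orbital (bₙ,dₙ) of f₁ in (a,c) satisfies dₙ = c. -/
/-- The support of a permutation `f` of `ℝ` : the set of points moved by `f`. -/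
def Supp (f : Equiv.Perm ℝ) : Set ℝ := {x : ℝ | f x ≠ x}

/-- `IsPL0 f` says that `f` is (the extension by the identity on `ℝ \ [0,1]` of) a
piecewise-linear orientation-preserving homeomorphism of the unit interval `[0,1]`
with only finitely many breakpoints; this represents membership in `PL₀(I)`.
The finite set `B` collects the possible points of non-differentiability: away from
`B` the map is locally affine. -/
def IsPL0 (f : Equiv.Perm ℝ) : Prop :=
  StrictMono ⇑f ∧ (∀ x : ℝ, x ≤ 0 → f x = x) ∧ (∀ x : ℝ, 1 ≤ x → f x = x) ∧
    ∃ B : Finset ℝ, ∀ x : ℝ, x ∉ B → ∃ s t : ℝ, ∀ᶠ y in nhds x, f y = s * y + t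

/-- `IsOrbital f a b` : the open interval `(a,b)` is an orbital of `f`, i.e. a
connected component of `Supp f` (an open interval contained in the support whose
endpoints are fixed by `f`). -/
def IsOrbital (f : Equiv.Perm ℝ) (a b : ℝ) : Prop :=
  a < b ∧ Set.Ioo a b ⊆ Supp f ∧ f a = a ∧ f b = b

open scoped commutatorElement

/-- The two defining relations `[f₀f₁⁻¹, f₁^{f₀}] = 1` and `[f₀f₁⁻¹, f₁^{f₀²}] = 1`
of Thompson's group `F`, for the pair `(f₀, f₁)`.  The paper composes in word order
(functions act on the right), so the paper's word `f₀f₁⁻¹` is the group element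
`f₁⁻¹ * f₀` in Mathlib's left-action convention, and the conjugate
`f₁^{f₀} = f₀⁻¹f₁f₀` is the element `f₀ * f₁ * f₀⁻¹`.  Recall `⁅a,b⁆ = 1 ↔ a*b = b*a`. -/
def ThompsonRel (f₀ f₁ : Equiv.Perm ℝ) : Prop :=
  ⁅f₁⁻¹ * f₀, f₀ * f₁ * f₀⁻¹⁆ = 1 ∧ ⁅f₁⁻¹ * f₀, f₀ ^ 2 * f₁ * (f₀ ^ 2)⁻¹⁆ = 1

theorem Equiv.Perm.apply_inv_self {α : Type*} (f : Equiv.Perm α) (x : α) : f (f⁻¹ x) = x :=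
  Equiv.apply_symm_apply f x

theorem Equiv.Perm.inv_apply_self {α : Type*} (f : Equiv.Perm α) (x : α) : f⁻¹ (f x) = x :=
  Equiv.symm_apply_apply f x

namespace AgreeAux

open Set Filter Topology

/-! ### Basic facts about strictly monotone permutations of ℝ -/

noncomputable def oi (f : Equiv.Perm ℝ) (hf : StrictMono ⇑f) : ℝ ≃o ℝ :=
  StrictMono.orderIsoOfSurjective ⇑f hf f.surjective

lemma oi_apply (f : Equiv.Perm ℝ) (hf : StrictMono ⇑f) (x : ℝ) : oi f hf x = f x := rfl

lemma cont_of_sm (f : Equiv.Perm ℝ) (hf : StrictMono ⇑f) : Continuous ⇑f :=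
  (oi f hf).continuous

lemma sm_inv (f : Equiv.Perm ℝ) (hf : StrictMono ⇑f) : StrictMono ⇑f⁻¹ := by
  intro x y hxy
  have := hf.lt_iff_lt (a := f⁻¹ x) (b := f⁻¹ y)
  simp only [Equiv.Perm.apply_inv_self] at this
  exact this.mp hxy

lemma fix_inv (f : Equiv.Perm ℝ) {x : ℝ} (h : f x = x) : f⁻¹ x = x := by
  conv_lhs => rw [← h]
  exact f.inv_apply_self x

/-- preservation of an open interval with fixed endpoints -/
lemma mem_interval_map (f : Equiv.Perm ℝ) (hf : StrictMono ⇑f) {P Q x : ℝ}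
    (hP : f P = P) (hQ : f Q = Q) (hx : x ∈ Ioo P Q) : f x ∈ Ioo P Q := by
  constructor
  · have := hf hx.1; rwa [hP] at this
  · have := hf hx.2; rwa [hQ] at this

lemma image_interval (f : Equiv.Perm ℝ) (hf : StrictMono ⇑f) {P Q : ℝ}
    (hP : f P = P) (hQ : f Q = Q) : ⇑f '' Ioo P Q = Ioo P Q := by
  apply subset_antisymm
  · rintro y ⟨x, hx, rfl⟩; exact mem_interval_map f hf hP hQ hx
  · intro y hy
    refine ⟨f⁻¹ y, ?_, f.apply_inv_self y⟩
    exact mem_interval_map f⁻¹ (sm_inv f hf) (fix_inv f hP) (fix_inv f hQ) hy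

/-! ### Monotone orbit lemmas -/

/-- orbit is monotone increasing if the first step goes up -/
lemma orbit_step_le (g : ℝ → ℝ) (hg : Monotone g) {x : ℝ} (hx : x ≤ g x) :
    ∀ n, g^[n] x ≤ g (g^[n] x) := by
  intro n
  induction n with
  | zero => simpa using hx
  | succ n ih =>
      rw [Function.iterate_succ_apply']
      exact hg ih

lemma orbit_step_ge (g : ℝ → ℝ) (hg : Monotone g) {x : ℝ} (hx : g x ≤ x) :
    ∀ n, g (g^[n] x) ≤ g^[n] x := by
  intro n
  induction n with
  | zero => simpa using hx
  | succ n ih =>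
      rw [Function.iterate_succ_apply']
      exact hg ih

lemma orbit_mono_of_le (g : ℝ → ℝ) (hg : Monotone g) {x : ℝ} (hx : x ≤ g x) :
    Monotone fun n => g^[n] x := by
  apply monotone_nat_of_le_succ
  intro n
  rw [Function.iterate_succ_apply']
  exact orbit_step_le g hg hx n

lemma orbit_le_of_fix (g : ℝ → ℝ) (hg : Monotone g) {x c : ℝ} (hc : g c = c) (hx : x ≤ c) :
    ∀ n, g^[n] x ≤ c := by
  intro n
  induction n with
  | zero => simpa using hx
  | succ n ih =>
      rw [Function.iterate_succ_apply']
      calc g (g^[n] x) ≤ g c := hg ih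
      _ = c := hc

lemma orbit_ge_of_fix (g : ℝ → ℝ) (hg : Monotone g) {x c : ℝ} (hc : g c = c) (hx : c ≤ x) :
    ∀ n, c ≤ g^[n] x := by
  intro n
  induction n with
  | zero => simpa using hx
  | succ n ih =>
      rw [Function.iterate_succ_apply']
      calc c = g c := hc.symm
      _ ≤ g (g^[n] x) := hg ih

/-- the supremum of an increasing bounded orbit is a fixed point -/
lemma fix_of_orbit_sup (g : ℝ → ℝ) (hcont : Continuous g) (hg : Monotone g)
    {x c : ℝ} (hx : x ≤ g x) (hbdd : ∀ n, g^[n] x ≤ c) :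
    ∃ L, g L = L ∧ x ≤ L ∧ L ≤ c ∧ Tendsto (fun n => g^[n] x) atTop (nhds L) ∧
      ∀ n, g^[n] x ≤ L := by
  have hmono := orbit_mono_of_le g hg hx
  have hbdd' : BddAbove (range fun n => g^[n] x) := ⟨c, by rintro y ⟨n, rfl⟩; exact hbdd n⟩
  set L := ⨆ n, g^[n] x with hL
  have htd : Tendsto (fun n => g^[n] x) atTop (nhds L) := tendsto_atTop_ciSup hmono hbdd'
  have h1 : Tendsto (fun n => g^[n+1] x) atTop (nhds L) := htd.comp (tendsto_add_atTop_nat 1)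
  have h2 : Tendsto (fun n => g (g^[n] x)) atTop (nhds (g L)) := (hcont.tendsto L).comp htd
  have h3 : (fun n => g^[n+1] x) = fun n => g (g^[n] x) := by
    funext n; rw [Function.iterate_succ_apply']
  rw [h3] at h1
  have hgL : g L = L := tendsto_nhds_unique h2 h1
  refine ⟨L, hgL, ?_, ?_, htd, fun n => le_ciSup hbdd' n⟩
  · simpa using le_ciSup hbdd' 0
  · exact ciSup_le hbdd

lemma fix_of_orbit_inf (g : ℝ → ℝ) (hcont : Continuous g) (hg : Monotone g)
    {x c : ℝ} (hx : g x ≤ x) (hbdd : ∀ n, c ≤ g^[n] x) :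
    ∃ L, g L = L ∧ L ≤ x ∧ c ≤ L ∧ Tendsto (fun n => g^[n] x) atTop (nhds L) ∧
      ∀ n, L ≤ g^[n] x := by
  have hmono : Antitone fun n => g^[n] x := by
    apply antitone_nat_of_succ_le
    intro n
    rw [Function.iterate_succ_apply']
    exact orbit_step_ge g hg hx n
  have hbdd' : BddBelow (range fun n => g^[n] x) := ⟨c, by rintro y ⟨n, rfl⟩; exact hbdd n⟩
  set L := ⨅ n, g^[n] x with hL
  have htd : Tendsto (fun n => g^[n] x) atTop (nhds L) := tendsto_atTop_ciInf hmono hbdd'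
  have h1 : Tendsto (fun n => g^[n+1] x) atTop (nhds L) := htd.comp (tendsto_add_atTop_nat 1)
  have h2 : Tendsto (fun n => g (g^[n] x)) atTop (nhds (g L)) := (hcont.tendsto L).comp htd
  have h3 : (fun n => g^[n+1] x) = fun n => g (g^[n] x) := by
    funext n; rw [Function.iterate_succ_apply']
  rw [h3] at h1
  have hgL : g L = L := tendsto_nhds_unique h2 h1
  refine ⟨L, hgL, ?_, ?_, htd, fun n => ciInf_le hbdd' n⟩
  · simpa using ciInf_le hbdd' 0
  · exact le_ciInf hbdd

/-- escape lemma: if `g` moves every point of `[z,d)` strictly up and fixes `d`,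
the orbit of `z` converges to `d` from below. -/
lemma orbit_escape (g : ℝ → ℝ) (hcont : Continuous g) (hg : StrictMono g)
    {z d : ℝ} (hd : g d = d) (hzd : z < d) (hfpf : ∀ y, z ≤ y → y < d → y < g y) :
    ∀ w, w < d → ∃ n, w < g^[n] z ∧ g^[n] z < d := by
  have hin : ∀ n, z ≤ g^[n] z ∧ g^[n] z < d := by
    intro n
    induction n with
    | zero => exact ⟨le_rfl, hzd⟩
    | succ n ih =>
        rw [Function.iterate_succ_apply']
        constructor
        · exact ih.1.trans (hfpf _ ih.1 ih.2).le
        · calc g (g^[n] z) < g d := hg ih.2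
          _ = d := hd
  have hx : z ≤ g z := (hfpf z le_rfl hzd).le
  have hbdd : ∀ n, g^[n] z ≤ d := fun n => (hin n).2.le
  obtain ⟨L, hgL, hzL, hLd, htd, _⟩ := fix_of_orbit_sup g hcont hg.monotone hx hbdd
  have hLd' : L = d := by
    rcases lt_or_eq_of_le hLd with h | h
    · exact absurd hgL (ne_of_gt (hfpf L hzL h))
    · exact h
  intro w hw
  rw [hLd'] at htd
  obtain ⟨n, hn⟩ := (htd.eventually (eventually_mem_set.2 (Ioi_mem_nhds hw))).exists
  exact ⟨n, hn, (hin n).2⟩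

/-! ### Sign constancy and frontier between points -/

lemma sign_const (g : ℝ → ℝ) (hcont : Continuous g) {P Q : ℝ}
    (hfpf : ∀ y ∈ Ioo P Q, g y ≠ y) {x y : ℝ} (hx : x ∈ Ioo P Q) (hy : y ∈ Ioo P Q)
    (hgx : x < g x) : y < g y := by
  by_contra hle
  push_neg at hle
  have hlt : g y < y := lt_of_le_of_ne hle (hfpf y hy)
  have hc : Continuous fun z => g z - z := hcont.sub continuous_id
  rcases le_or_gt x y with hxy | hxy
  · obtain ⟨z, hz, hz0⟩ := intermediate_value_Icc' hxy hc.continuousOn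
      (show (0:ℝ) ∈ Icc (g y - y) (g x - x) by constructor <;> [linarith; linarith])
    have hzio : z ∈ Ioo P Q := ⟨lt_of_lt_of_le hx.1 hz.1, lt_of_le_of_lt hz.2 hy.2⟩
    have hz0' : g z - z = 0 := hz0
    exact hfpf z hzio (by linarith)
  · obtain ⟨z, hz, hz0⟩ := intermediate_value_Icc hxy.le hc.continuousOn
      (show (0:ℝ) ∈ Icc (g y - y) (g x - x) by constructor <;> [linarith; linarith])
    have hzio : z ∈ Ioo P Q := ⟨lt_of_lt_of_le hy.1 hz.1, lt_of_le_of_lt hz.2 hx.2⟩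
    have hz0' : g z - z = 0 := hz0
    exact hfpf z hzio (by linarith)

/-- between a non-member and a member of an open set there is a frontier point
(from the left). -/
lemma frontier_between_left {W : Set ℝ} (hW : IsOpen W) {x c : ℝ} (hx : x ∉ W) (hc : c ∈ W)
    (hxc : x < c) : ∃ v, v ∈ frontier W ∧ x ≤ v ∧ v < c ∧ Ioo v c ⊆ W := by
  set S := Icc x c ∩ Wᶜ with hS
  have hScl : IsClosed S := isClosed_Icc.inter hW.isClosed_compl
  have hSne : S.Nonempty := ⟨x, ⟨le_rfl, hxc.le⟩, hx⟩
  have hSbdd : BddAbove S := ⟨c, fun y hy => hy.1.2⟩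
  set v := sSup S with hv
  have hvS : v ∈ S := hScl.csSup_mem hSne hSbdd
  have hvc : v < c := lt_of_le_of_ne hvS.1.2 (fun h => hvS.2 (h ▸ hc))
  have hIoo : Ioo v c ⊆ W := by
    intro y hy
    by_contra hyW
    have : y ∈ S := ⟨⟨hvS.1.1.trans hy.1.le, hy.2.le⟩, hyW⟩
    exact absurd (le_csSup hSbdd this) (not_le.2 hy.1)
  refine ⟨v, ?_, hvS.1.1, hvc, hIoo⟩
  rw [frontier, hW.interior_eq]
  refine ⟨?_, hvS.2⟩
  have : v ∈ closure (Ioo v c) := by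
    rw [closure_Ioo (ne_of_lt hvc)]
    exact ⟨le_rfl, hvc.le⟩
  exact closure_mono hIoo this

lemma frontier_between_right {W : Set ℝ} (hW : IsOpen W) {x c : ℝ} (hx : x ∉ W) (hc : c ∈ W)
    (hxc : c < x) : ∃ v, v ∈ frontier W ∧ v ≤ x ∧ c < v ∧ Ioo c v ⊆ W := by
  set S := Icc c x ∩ Wᶜ with hS
  have hScl : IsClosed S := isClosed_Icc.inter hW.isClosed_compl
  have hSne : S.Nonempty := ⟨x, ⟨hxc.le, le_rfl⟩, hx⟩
  have hSbdd : BddBelow S := ⟨c, fun y hy => hy.1.1⟩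
  set v := sInf S with hv
  have hvS : v ∈ S := hScl.csInf_mem hSne hSbdd
  have hvc : c < v := lt_of_le_of_ne hvS.1.1 (fun h => hvS.2 (h ▸ hc))
  have hIoo : Ioo c v ⊆ W := by
    intro y hy
    by_contra hyW
    have : y ∈ S := ⟨⟨hy.1.le, hy.2.le.trans hvS.1.2⟩, hyW⟩
    exact absurd (csInf_le hSbdd this) (not_le.2 hy.2)
  refine ⟨v, ?_, hvS.1.2, hvc, hIoo⟩
  rw [frontier, hW.interior_eq]
  refine ⟨?_, hvS.2⟩
  have : v ∈ closure (Ioo c v) := by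
    rw [closure_Ioo (ne_of_lt hvc)]
    exact ⟨hvc.le, le_rfl⟩
  exact closure_mono hIoo this

/-! ### Affine structure of PL maps -/

/-- two affine maps that agree at two distinct points agree everywhere -/
lemma affine_eq_of_two (s t s' t' x y : ℝ) (hxy : x ≠ y)
    (h1 : s * x + t = s' * x + t') (h2 : s * y + t = s' * y + t') :
    s = s' ∧ t = t' := by
  have hs : s = s' := by
    have : s * x - s' * x = s * y - s' * y := by linarith
    have h3 : (s - s') * (x - y) = 0 := by ring_nf; nlinarith [this]
    rcases mul_eq_zero.1 h3 with h | h
    · linarith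
    · exact absurd (by linarith : x = y) hxy
  exact ⟨hs, by rw [hs] at h1; linarith⟩

/-- a map locally affine off a finite set is affine on any interval avoiding the set -/
lemma affine_on_gap (f : ℝ → ℝ) (B : Finset ℝ)
    (hloc : ∀ x : ℝ, x ∉ B → ∃ s t : ℝ, ∀ᶠ y in nhds x, f y = s * y + t)
    {l u : ℝ} (hlu : l < u) (hB : ∀ b ∈ B, (b : ℝ) ∉ Ioo l u) :
    ∃ s t : ℝ, ∀ y ∈ Ioo l u, f y = s * y + t := by
  have hx₀ : (l + u) / 2 ∈ Ioo l u := ⟨by linarith, by linarith⟩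
  obtain ⟨s, t, hst⟩ := hloc ((l + u)/2) (fun h => hB _ h hx₀)
  set T := {x : ℝ | ∀ᶠ y in nhds x, f y = s * y + t} with hT
  have hTopen : IsOpen T := by
    apply isOpen_iff_mem_nhds.2
    intro x hx
    exact hx.eventually_nhds
  have hsub : Ioo l u ⊆ T := by
    apply (isPreconnected_Ioo).subset_of_closure_inter_subset hTopen
      ⟨(l+u)/2, hx₀, hst⟩
    intro x ⟨hxcl, hxio⟩
    obtain ⟨s', t', hs't'⟩ := hloc x (fun h => hB _ h hxio)
    -- pick a point of T near x where both eventualities hold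
    have hnb : ∃ z ∈ T, ∀ᶠ y in nhds z, f y = s' * y + t' := by
      rw [mem_closure_iff_nhds] at hxcl
      obtain ⟨z, hz1, hz2⟩ := hxcl _ hs't'.eventually_nhds
      exact ⟨z, hz2, hz1⟩
    obtain ⟨z, hzT, hz'⟩ := hnb
    have hboth : ∀ᶠ y in nhds z, f y = s * y + t ∧ f y = s' * y + t' := hzT.and hz'
    -- two distinct points near z
    obtain ⟨ε, hε, hball⟩ := Metric.eventually_nhds_iff.1 hboth
    have h1 := hball (show dist z z < ε by simpa using hε)
    have h2 := hball (show dist (z + ε/2) z < ε by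
      rw [Real.dist_eq, show z + ε/2 - z = ε/2 by ring, abs_of_pos (by linarith : (0:ℝ) < ε/2)]
      linarith)
    obtain ⟨hs, ht⟩ := affine_eq_of_two s t s' t' z (z + ε/2) (by linarith)
      (h1.1.symm.trans h1.2) (h2.1.symm.trans h2.2)
    rw [hT]; simp only [mem_setOf_eq]
    subst hs; subst ht
    exact hs't'
  exact ⟨s, t, fun y hy => (hsub hy).self_of_nhds⟩

/-! ### Affine zones next to a point -/

/-- a locally-affine-off-finite map is affine on some interval `(w, e)` -/
lemma pl_affine_left (f : ℝ → ℝ) (B : Finset ℝ)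
    (hloc : ∀ x : ℝ, x ∉ B → ∃ s t : ℝ, ∀ᶠ y in nhds x, f y = s * y + t) (e : ℝ) :
    ∃ w, w < e ∧ ∃ s t : ℝ, ∀ y ∈ Ioo w e, f y = s * y + t := by
  classical
  set S := (↑B ∪ {e - 1} : Set ℝ) ∩ Iio e with hS
  have hSfin : S.Finite := (B.finite_toSet.union (finite_singleton _)).inter_of_left _
  have hSne : S.Nonempty := ⟨e - 1, Or.inr rfl, by simp⟩
  set w := sSup S with hw
  have hwS : w ∈ S := hSne.csSup_mem hSfin
  have hwe : w < e := hwS.2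
  have hgap : ∀ b ∈ B, (b : ℝ) ∉ Ioo w e := by
    intro b hb hbio
    have : b ∈ S := ⟨Or.inl (by exact_mod_cast hb), hbio.2⟩
    exact absurd (le_csSup hSfin.bddAbove this) (not_le.2 hbio.1)
  obtain ⟨st, t, h⟩ := affine_on_gap f B hloc hwe hgap
  exact ⟨w, hwe, st, t, h⟩

lemma pl_affine_right (f : ℝ → ℝ) (B : Finset ℝ)
    (hloc : ∀ x : ℝ, x ∉ B → ∃ s t : ℝ, ∀ᶠ y in nhds x, f y = s * y + t) (e : ℝ) :
    ∃ w, e < w ∧ ∃ s t : ℝ, ∀ y ∈ Ioo e w, f y = s * y + t := by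
  classical
  set S := (↑B ∪ {e + 1} : Set ℝ) ∩ Ioi e with hS
  have hSfin : S.Finite := (B.finite_toSet.union (finite_singleton _)).inter_of_left _
  have hSne : S.Nonempty := ⟨e + 1, Or.inr rfl, by simp⟩
  set w := sInf S with hw
  have hwS : w ∈ S := hSne.csInf_mem hSfin
  have hwe : e < w := hwS.2
  have hgap : ∀ b ∈ B, (b : ℝ) ∉ Ioo e w := by
    intro b hb hbio
    have : b ∈ S := ⟨Or.inl (by exact_mod_cast hb), hbio.1⟩
    exact absurd (csInf_le hSfin.bddBelow this) (not_le.2 hbio.2)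
  obtain ⟨st, t, h⟩ := affine_on_gap f B hloc hwe hgap
  exact ⟨w, hwe, st, t, h⟩

/-- continuity extends an affine formula to the right endpoint of the interval -/
lemma affine_extend_right (f : ℝ → ℝ) (hcont : Continuous f) {w e s t : ℝ} (hwe : w < e)
    (h : ∀ y ∈ Ioo w e, f y = s * y + t) : f e = s * e + t := by
  have he : EqOn f (fun y => s * y + t) (Ioo w e) := fun y hy => h y hy
  have hcl := he.closure hcont (by continuity)
  have : e ∈ closure (Ioo w e) := by
    rw [closure_Ioo (ne_of_lt hwe)]
    exact ⟨hwe.le, le_rfl⟩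
  exact hcl this

lemma affine_extend_left (f : ℝ → ℝ) (hcont : Continuous f) {w e s t : ℝ} (hwe : e < w)
    (h : ∀ y ∈ Ioo e w, f y = s * y + t) : f e = s * e + t := by
  have he : EqOn f (fun y => s * y + t) (Ioo e w) := fun y hy => h y hy
  have hcl := he.closure hcont (by continuity)
  have : e ∈ closure (Ioo e w) := by
    rw [closure_Ioo (ne_of_lt hwe)]
    exact ⟨le_rfl, hwe.le⟩
  exact hcl this

/-- if an affine-on-a-zone continuous map has two distinct fixed points in the
closed zone, it is the identity on the zone -/
lemma id_of_two_fixed (f : ℝ → ℝ) {w e s t x y : ℝ}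
    (h : ∀ z ∈ Ioo w e, f z = s * z + t) (hx : x ∈ Ioo w e) (hy : y ∈ Ioo w e)
    (hxy : x ≠ y) (hfx : f x = x) (hfy : f y = y) : ∀ z ∈ Ioo w e, f z = z := by
  have h1 : s * x + t = 1 * x + 0 := by rw [← h x hx]; simp [hfx]
  have h2 : s * y + t = 1 * y + 0 := by rw [← h y hy]; simp [hfy]
  obtain ⟨hs, ht⟩ := affine_eq_of_two s t 1 0 x y hxy h1 h2
  intro z hz
  rw [h z hz, hs, ht]; ring

/-! ### Closure properties of local piecewise linearity -/

def LocPL (g : ℝ → ℝ) : Prop :=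
  ∃ B : Finset ℝ, ∀ x : ℝ, x ∉ B → ∃ s t : ℝ, ∀ᶠ y in nhds x, g y = s * y + t

lemma locPL_of_isPL0 {f : Equiv.Perm ℝ} (h : IsPL0 f) : LocPL ⇑f := h.2.2.2

lemma slope_pos {f : ℝ → ℝ} (hm : StrictMono f) {x s t : ℝ}
    (hev : ∀ᶠ y in nhds x, f y = s * y + t) : 0 < s := by
  obtain ⟨ε, hε, hball⟩ := Metric.eventually_nhds_iff.1 hev
  have h1 := hball (show dist x x < ε by simpa using hε)
  have h2 := hball (show dist (x + ε/2) x < ε by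
    rw [Real.dist_eq, show x + ε/2 - x = ε/2 by ring, abs_of_pos (by linarith : (0:ℝ) < ε/2)]
    linarith)
  have := hm (show x < x + ε/2 by linarith)
  rw [h1, h2] at this
  nlinarith

lemma LocPL.comp_perm {f g : Equiv.Perm ℝ} (hf : LocPL ⇑f) (hg : LocPL ⇑g)
    (hgc : Continuous ⇑g) : LocPL fun x => f (g x) := by
  classical
  obtain ⟨Bf, hBf⟩ := hf
  obtain ⟨Bg, hBg⟩ := hg
  refine ⟨Bg ∪ Bf.image ⇑g⁻¹, fun x hx => ?_⟩
  simp only [Finset.mem_union, Finset.mem_image, not_or, not_exists, not_and] at hx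
  obtain ⟨s, t, hst⟩ := hBg x hx.1
  have hgx : g x ∉ Bf := by
    intro hmem
    exact hx.2 (g x) hmem (by simp)
  obtain ⟨s', t', hs't'⟩ := hBf (g x) hgx
  have hev : ∀ᶠ y in nhds x, f (g y) = s' * (g y) + t' :=
    (hgc.tendsto x).eventually hs't'
  refine ⟨s' * s, s' * t + t', ?_⟩
  filter_upwards [hst, hev] with y h1 h2
  rw [h2, h1]; ring

lemma LocPL.inv_perm {f : Equiv.Perm ℝ} (hsm : StrictMono ⇑f) (hf : LocPL ⇑f) :
    LocPL ⇑f⁻¹ := by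
  classical
  obtain ⟨B, hB⟩ := hf
  refine ⟨B.image ⇑f, fun x hx => ?_⟩
  simp only [Finset.mem_image, not_exists, not_and] at hx
  have hfx : f⁻¹ x ∉ B := by
    intro hmem
    exact hx (f⁻¹ x) hmem (f.apply_inv_self x)
  obtain ⟨s, t, hst⟩ := hB (f⁻¹ x) hfx
  have hs : 0 < s := slope_pos hsm hst
  have hcinv : Continuous ⇑f⁻¹ := cont_of_sm f⁻¹ (sm_inv f hsm)
  have hev : ∀ᶠ y in nhds x, f (f⁻¹ y) = s * (f⁻¹ y) + t :=
    (hcinv.tendsto x).eventually hst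
  refine ⟨1/s, -t/s, ?_⟩
  filter_upwards [hev] with y h1
  rw [f.apply_inv_self] at h1
  have hss : s ≠ 0 := ne_of_gt hs
  have h2 : (1/s) * y + -t/s = (1/s) * (s * (f⁻¹ y) + t) + -t/s := by rw [← h1]
  rw [h2]
  field_simp
  ring

lemma coe_pow_succ (f : Equiv.Perm ℝ) (n : ℕ) : ⇑(f ^ (n+1)) = fun x => (f^n) (f x) := by
  funext x
  rw [pow_succ]
  rfl

lemma cont_pow (f : Equiv.Perm ℝ) (hfc : Continuous ⇑f) (n : ℕ) : Continuous ⇑(f ^ n) := by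
  induction n with
  | zero => simp only [pow_zero]; exact continuous_id'.congr (fun x => rfl)
  | succ n ih =>
      rw [coe_pow_succ]
      exact ih.comp hfc

lemma LocPL.pow_perm {f : Equiv.Perm ℝ} (hf : LocPL ⇑f) (hfc : Continuous ⇑f) (n : ℕ) :
    LocPL ⇑(f ^ n) := by
  induction n with
  | zero =>
      refine ⟨∅, fun x _ => ⟨1, 0, ?_⟩⟩
      filter_upwards with y
      simp
  | succ n ih =>
      rw [coe_pow_succ]
      exact LocPL.comp_perm ih hf hfc

/-! ### The support of a PL₀ map -/

lemma supp_open {f : Equiv.Perm ℝ} (hpl : IsPL0 f) : IsOpen (Supp f) := by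
  have : IsClosed {x : ℝ | f x = x} := isClosed_eq (cont_of_sm f hpl.1) continuous_id
  exact this.isOpen_compl

lemma supp_subset {f : Equiv.Perm ℝ} (hpl : IsPL0 f) : Supp f ⊆ Ioo 0 1 := by
  intro x hx
  by_contra hmem
  simp only [mem_Ioo, not_and_or, not_lt] at hmem
  rcases hmem with h | h
  · exact hx (hpl.2.1 x h)
  · exact hx (hpl.2.2.1 x h)

lemma frontier_fixed {f : Equiv.Perm ℝ} (hpl : IsPL0 f) {x : ℝ}
    (hx : x ∈ frontier (Supp f)) : f x = x := by
  have := hx.2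
  rw [(supp_open hpl).interior_eq] at this
  by_contra h
  exact this h

lemma frontier_supp_subset {f : Equiv.Perm ℝ} (hpl : IsPL0 f) :
    frontier (Supp f) ⊆ Icc 0 1 := by
  intro x hx
  have h1 : x ∈ closure (Supp f) := hx.1
  have h2 : closure (Supp f) ⊆ closure (Ioo 0 1) := closure_mono (supp_subset hpl)
  rw [closure_Ioo (by norm_num : (0:ℝ) ≠ 1)] at h2
  exact h2 h1

/-- Main finiteness: the frontier of the support of a PL₀ map is finite. -/
lemma frontier_supp_finite {f : Equiv.Perm ℝ} (hpl : IsPL0 f) :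
    (frontier (Supp f)).Finite := by
  classical
  obtain ⟨B, hB⟩ := hpl.2.2.2
  have hcont := cont_of_sm f hpl.1
  set φ : ℝ → ℝ := fun x => sSup ((↑B ∪ {-2} : Set ℝ) ∩ Iio x) with hφ
  have hfin : ∀ x : ℝ, ((↑B ∪ {-2} : Set ℝ) ∩ Iio x).Finite :=
    fun x => (B.finite_toSet.union (finite_singleton _)).inter_of_left _
  have hmem : ∀ x : ℝ, 0 ≤ x → φ x ∈ (↑B ∪ {-2} : Set ℝ) ∩ Iio x := by
    intro x hx
    exact Set.Nonempty.csSup_mem ⟨-2, Or.inr rfl, by simp only [mem_Iio]; linarith⟩ (hfin x)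
  -- no two frontier points off B share a B-free gap
  have hkey : ∀ x y : ℝ, x ∈ frontier (Supp f) → y ∈ frontier (Supp f) →
      x ∉ ↑B → x < y → (∀ b ∈ B, (b:ℝ) ∉ Ioo x y) → False := by
    intro x y hxf hyf hxB hxy hgap
    obtain ⟨s, t, hst⟩ := affine_on_gap ⇑f B hB hxy hgap
    have hfx : f x = x := frontier_fixed hpl hxf
    have hfy : f y = y := frontier_fixed hpl hyf
    have hex : (s * x + t : ℝ) = 1 * x + 0 := by
      rw [← affine_extend_left ⇑f hcont hxy hst, hfx]; ring
    have hey : (s * y + t : ℝ) = 1 * y + 0 := by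
      rw [← affine_extend_right ⇑f hcont hxy hst, hfy]; ring
    obtain ⟨hs1, ht0⟩ := affine_eq_of_two s t 1 0 x y (ne_of_lt hxy) hex hey
    -- f is the identity on (x,y)
    have hid : ∀ z ∈ Ioo x y, f z = z := by
      intro z hz; rw [hst z hz, hs1, ht0]; ring
    -- local affineness at x forces f = id near x
    obtain ⟨s₀, t₀, hev⟩ := hB x hxB
    obtain ⟨ε, hε, hball⟩ := Metric.eventually_nhds_iff.1 hev
    set δ := min ε (y - x) with hδ
    have hδpos : 0 < δ := lt_min hε (by linarith)
    have hp : ∀ u : ℝ, 0 < u → u < δ → f (x + u) = x + u ∧ f (x + u) = s₀ * (x + u) + t₀ := by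
      intro u hu huδ
      constructor
      · apply hid
        constructor
        · linarith
        · have : u < y - x := lt_of_lt_of_le huδ (min_le_right _ _)
          linarith
      · apply hball
        rw [Real.dist_eq, show x + u - x = u by ring, abs_of_pos hu]
        exact lt_of_lt_of_le huδ (min_le_left _ _)
    obtain ⟨h1, h1'⟩ := hp (δ/2) (by linarith) (by linarith)
    obtain ⟨h2, h2'⟩ := hp (δ/4) (by linarith) (by linarith)
    obtain ⟨hs₀, ht₀⟩ := affine_eq_of_two s₀ t₀ 1 0 (x + δ/2) (x + δ/4) (by intro h; linarith)
      (by rw [← h1', h1]; ring) (by rw [← h2', h2]; ring)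
    -- then f is the identity on the ε-ball around x, contradicting x ∈ closure (Supp f)
    have hxcl : x ∈ closure (Supp f) := hxf.1
    rw [Metric.mem_closure_iff] at hxcl
    obtain ⟨z, hzS, hzd⟩ := hxcl ε hε
    have : f z = z := by
      have := hball (show dist z x < ε by rwa [dist_comm] at hzd)
      rw [this, hs₀, ht₀]; ring
    exact hzS this
  -- injectivity of φ on frontier \ B
  have hinj : InjOn φ (frontier (Supp f) \ ↑B) := by
    intro x hx y hy hxy
    by_contra hne
    rcases lt_or_gt_of_ne hne with hlt | hlt
    · have h0x : (0:ℝ) ≤ x := (frontier_supp_subset hpl hx.1).1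
      apply hkey x y hx.1 hy.1 hx.2 hlt
      intro b hb hbio
      have hby : (b:ℝ) ∈ (↑B ∪ {-2} : Set ℝ) ∩ Iio y := ⟨Or.inl (by exact_mod_cast hb), hbio.2⟩
      have h1 : (b:ℝ) ≤ φ y := le_csSup (hfin y).bddAbove hby
      have h2 : φ x < x := (hmem x h0x).2
      rw [hxy] at h2
      linarith [hbio.1]
    · have h0y : (0:ℝ) ≤ y := (frontier_supp_subset hpl hy.1).1
      apply hkey y x hy.1 hx.1 hy.2 hlt
      intro b hb hbio
      have hbx : (b:ℝ) ∈ (↑B ∪ {-2} : Set ℝ) ∩ Iio x := ⟨Or.inl (by exact_mod_cast hb), hbio.2⟩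
      have h1 : (b:ℝ) ≤ φ x := le_csSup (hfin x).bddAbove hbx
      have h2 : φ y < y := (hmem y h0y).2
      rw [← hxy] at h2
      linarith [hbio.1]
  have himg : φ '' (frontier (Supp f) \ ↑B) ⊆ (↑B ∪ {-2} : Set ℝ) := by
    rintro _ ⟨x, hx, rfl⟩
    exact (hmem x (frontier_supp_subset hpl hx.1).1).1
  have hfin2 : (frontier (Supp f) \ ↑B).Finite := by
    apply Set.Finite.of_finite_image _ hinj
    exact ((B.finite_toSet.union (finite_singleton _)).subset himg)
  have : frontier (Supp f) ⊆ (frontier (Supp f) \ ↑B) ∪ ↑B := by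
    intro x hx
    by_cases h : x ∈ ↑B
    · exact Or.inr h
    · exact Or.inl ⟨hx, h⟩
  exact (hfin2.union B.finite_toSet).subset this

/-! ### Strictly monotone bijections of a finite set -/

lemma mono_bij_finite_id {T : Set ℝ} (hT : T.Finite) {g : ℝ → ℝ} (hg : StrictMono g)
    (hbij : g '' T = T) : ∀ x ∈ T, g x = x := by
  have key : ∀ k : ℕ, ∀ x ∈ T, (T ∩ Iio x).ncard = k → g x = x := by
    intro k
    induction k using Nat.strong_induction_on with
    | _ k IH =>
      intro x hx hk
      have IH' : ∀ y ∈ T, y < x → g y = y := by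
        intro y hy hyx
        have hsub : T ∩ Iio y ⊂ T ∩ Iio x := by
          constructor
          · intro z hz
            exact ⟨hz.1, lt_trans hz.2 hyx⟩
          · intro hcon
            exact absurd (hcon ⟨hy, hyx⟩).2 (lt_irrefl y)
        have hlt := Set.ncard_lt_ncard hsub (hT.inter_of_left _)
        rw [hk] at hlt
        exact IH _ hlt y hy rfl
      have hgx : g x ∈ T := by
        rw [← hbij]; exact ⟨x, hx, rfl⟩
      rcases lt_trichotomy (g x) x with hlt | heq | hgt
      · exfalso
        have h1 : g (g x) = g x := IH' (g x) hgx hlt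
        have h2 : g (g x) < g x := hg hlt
        rw [h1] at h2
        exact lt_irrefl _ h2
      · exact heq
      · exfalso
        have hxg : x ∈ g '' T := hbij.symm ▸ hx
        obtain ⟨y, hy, hyx⟩ := hxg
        rcases lt_trichotomy y x with h | h | h
        · have := IH' y hy h
          rw [this] at hyx
          exact absurd hyx (ne_of_lt h)
        · rw [h] at hyx
          rw [hyx] at hgt
          exact lt_irrefl _ hgt
        · have h2 : g x < g y := hg h
          rw [hyx] at h2
          exact absurd (lt_trans hgt h2) (lt_irrefl x)
  intro x hx
  exact key _ x hx rfl

/-! ### Supports and conjugation -/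

lemma supp_mul_apply {g k : Equiv.Perm ℝ} (x : ℝ) : (g * k) x = g (k x) := rfl

lemma supp_conj (g k : Equiv.Perm ℝ) : Supp (g * k * g⁻¹) = ⇑g '' Supp k := by
  ext x
  simp only [Supp, mem_setOf_eq, mem_image]
  constructor
  · intro hx
    refine ⟨g⁻¹ x, ?_, g.apply_inv_self x⟩
    intro hcon
    apply hx
    show g (k (g⁻¹ x)) = x
    rw [hcon, g.apply_inv_self]
  · rintro ⟨y, hy, rfl⟩
    intro hcon
    apply hy
    have h2 : g (k (g⁻¹ (g y))) = g y := hcon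
    rw [g.inv_apply_self] at h2
    exact g.injective h2

lemma supp_invariant_of_commute {g k : Equiv.Perm ℝ} (hc : k * g = g * k) :
    ⇑k '' Supp g = Supp g := by
  have : k * g * k⁻¹ = g := by
    rw [hc]
    group
  rw [← supp_conj k g, this]

/-- image of the frontier of an invariant set under a strictly monotone permutation -/
lemma image_frontier_perm (k : Equiv.Perm ℝ) (hk : StrictMono ⇑k) (S : Set ℝ) :
    ⇑k '' frontier S = frontier (⇑k '' S) := by
  have := ((oi k hk).toHomeomorph).image_frontier S
  rwa [show ⇑(oi k hk).toHomeomorph = ⇑k from rfl] at this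

lemma frontier_invariant {k : Equiv.Perm ℝ} (hk : StrictMono ⇑k) {S : Set ℝ}
    (hS : ⇑k '' S = S) : ⇑k '' frontier S = frontier S := by
  rw [image_frontier_perm k hk, hS]

/-! ### IsPL0 closure -/

lemma isPL0_mul {f g : Equiv.Perm ℝ} (hf : IsPL0 f) (hg : IsPL0 g) : IsPL0 (f * g) := by
  refine ⟨?_, ?_, ?_, ?_⟩
  · exact hf.1.comp hg.1
  · intro x hx
    show f (g x) = x
    rw [hg.2.1 x hx, hf.2.1 x hx]
  · intro x hx
    show f (g x) = x
    rw [hg.2.2.1 x hx, hf.2.2.1 x hx]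
  · exact LocPL.comp_perm hf.2.2.2 hg.2.2.2 (cont_of_sm g hg.1)

lemma isPL0_inv {f : Equiv.Perm ℝ} (hf : IsPL0 f) : IsPL0 f⁻¹ := by
  refine ⟨sm_inv f hf.1, ?_, ?_, LocPL.inv_perm hf.1 hf.2.2.2⟩
  · intro x hx
    exact fix_inv f (hf.2.1 x hx)
  · intro x hx
    exact fix_inv f (hf.2.2.1 x hx)

lemma isPL0_one : IsPL0 (1 : Equiv.Perm ℝ) := by
  refine ⟨fun x y h => h, fun x _ => rfl, fun x _ => rfl, ⟨∅, fun x _ => ⟨1, 0, ?_⟩⟩⟩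
  filter_upwards with y
  simp

lemma isPL0_pow {f : Equiv.Perm ℝ} (hf : IsPL0 f) (n : ℕ) : IsPL0 (f ^ n) := by
  induction n with
  | zero => simpa using isPL0_one
  | succ n ih =>
      rw [pow_succ]
      exact isPL0_mul ih hf

/-! ### The relation machine -/

section Rel

variable (f₀ f₁ : Equiv.Perm ℝ)

/-- `K n = f₀ⁿ f₁ f₀⁻ⁿ` -/
def KK (n : ℕ) : Equiv.Perm ℝ := f₀ ^ n * f₁ * (f₀ ^ n)⁻¹

/-- `h = f₁⁻¹ f₀` -/
def hh : Equiv.Perm ℝ := f₁⁻¹ * f₀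

lemma KK_succ (n : ℕ) : KK f₀ f₁ (n + 1) = f₀ * KK f₀ f₁ n * f₀⁻¹ := by
  unfold KK
  rw [pow_succ']
  group

lemma KK_one : KK f₀ f₁ 1 = f₀ * f₁ * f₀⁻¹ := by
  unfold KK; rw [pow_one]

variable {f₀ f₁}

lemma isPL0_KK (h₀ : IsPL0 f₀) (h₁ : IsPL0 f₁) (n : ℕ) : IsPL0 (KK f₀ f₁ n) :=
  isPL0_mul (isPL0_mul (isPL0_pow h₀ n) h₁) (isPL0_inv (isPL0_pow h₀ n))

lemma isPL0_hh (h₀ : IsPL0 f₀) (h₁ : IsPL0 f₁) : IsPL0 (hh f₀ f₁) :=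
  isPL0_mul (isPL0_inv h₁) h₀

lemma comm_K1 (hrel : ThompsonRel f₀ f₁) : Commute (hh f₀ f₁) (KK f₀ f₁ 1) := by
  have := commutatorElement_eq_one_iff_commute.mp hrel.1
  rwa [show f₀ * f₁ * f₀⁻¹ = KK f₀ f₁ 1 from (KK_one f₀ f₁).symm] at this

lemma comm_K2 (hrel : ThompsonRel f₀ f₁) : Commute (hh f₀ f₁) (KK f₀ f₁ 2) := by
  have := commutatorElement_eq_one_iff_commute.mp hrel.2
  exact this

/-- if `h` commutes with `Kₙ` then `Kₙ₊₁ = f₁ Kₙ f₁⁻¹` -/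
lemma conj_f1 {n : ℕ} (hc : Commute (hh f₀ f₁) (KK f₀ f₁ n)) :
    KK f₀ f₁ (n + 1) = f₁ * KK f₀ f₁ n * f₁⁻¹ := by
  have h2 := hc.eq
  rw [show hh f₀ f₁ = f₁⁻¹ * f₀ from rfl] at h2
  calc KK f₀ f₁ (n+1) = f₀ * KK f₀ f₁ n * f₀⁻¹ := KK_succ f₀ f₁ n
    _ = f₁ * (f₁⁻¹ * f₀ * KK f₀ f₁ n) * f₀⁻¹ := by group
    _ = f₁ * (KK f₀ f₁ n * (f₁⁻¹ * f₀)) * f₀⁻¹ := by rw [h2]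
    _ = f₁ * KK f₀ f₁ n * f₁⁻¹ := by group

/-- `h` commutes with every `Kₙ`, `n ≥ 1` -/
lemma comm_K (hrel : ThompsonRel f₀ f₁) :
    ∀ n : ℕ, Commute (hh f₀ f₁) (KK f₀ f₁ (n + 1)) := by
  intro n
  induction n using Nat.strong_induction_on with
  | _ n IH =>
    match n with
    | 0 => exact comm_K1 hrel
    | 1 => exact comm_K2 hrel
    | (m + 2) =>
      have hIHm : Commute (hh f₀ f₁) (KK f₀ f₁ (m + 1)) := IH m (by omega)
      have hIHm1 : Commute (hh f₀ f₁) (KK f₀ f₁ (m + 2)) := IH (m + 1) (by omega)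
      have e2 : KK f₀ f₁ (m + 2) = f₁ * KK f₀ f₁ (m + 1) * f₁⁻¹ := conj_f1 hIHm
      have e3 : KK f₀ f₁ (m + 3) = KK f₀ f₁ 1 * KK f₀ f₁ (m + 2) * (KK f₀ f₁ 1)⁻¹ := by
        have l1 : KK f₀ f₁ (m+3) = f₀ * (f₁ * KK f₀ f₁ (m+1) * f₁⁻¹) * f₀⁻¹ := by
          rw [← e2]; exact KK_succ f₀ f₁ (m+2)
        have l2 : KK f₀ f₁ (m+2) = f₀ * KK f₀ f₁ (m+1) * f₀⁻¹ := KK_succ f₀ f₁ (m+1)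
        rw [l1, l2, KK_one]
        group
      rw [show m + 2 + 1 = m + 3 from rfl, e3]
      exact ((comm_K1 hrel).mul_right hIHm1).mul_right (comm_K1 hrel).inv_right

lemma supp_KK (n : ℕ) : Supp (KK f₀ f₁ n) = ⇑(f₀ ^ n) '' Supp f₁ := supp_conj _ _

/-- `h` fixes every point of the frontier of `Supp Kₙ`, `n ≥ 1` -/
lemma h_fix_frontier (hrel : ThompsonRel f₀ f₁) (h₀ : IsPL0 f₀) (h₁ : IsPL0 f₁) (n : ℕ) :
    ∀ x ∈ frontier (Supp (KK f₀ f₁ (n + 1))), hh f₀ f₁ x = x := by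
  have hsm : StrictMono ⇑(hh f₀ f₁) := (isPL0_hh h₀ h₁).1
  have hfin : (frontier (Supp (KK f₀ f₁ (n + 1)))).Finite :=
    frontier_supp_finite (isPL0_KK h₀ h₁ (n + 1))
  have hinv : ⇑(hh f₀ f₁) '' Supp (KK f₀ f₁ (n + 1)) = Supp (KK f₀ f₁ (n + 1)) :=
    supp_invariant_of_commute (comm_K hrel n).eq
  exact mono_bij_finite_id hfin hsm (frontier_invariant hsm hinv)

/-- `Kₙ` fixes every point of the frontier of `Supp h`, `n ≥ 1` -/
lemma K_fix_frontier (hrel : ThompsonRel f₀ f₁) (h₀ : IsPL0 f₀) (h₁ : IsPL0 f₁) (n : ℕ) :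
    ∀ x ∈ frontier (Supp (hh f₀ f₁)), KK f₀ f₁ (n + 1) x = x := by
  have hsm : StrictMono ⇑(KK f₀ f₁ (n+1)) := (isPL0_KK h₀ h₁ (n+1)).1
  have hfin : (frontier (Supp (hh f₀ f₁))).Finite :=
    frontier_supp_finite (isPL0_hh h₀ h₁)
  have hinv : ⇑(KK f₀ f₁ (n+1)) '' Supp (hh f₀ f₁) = Supp (hh f₀ f₁) :=
    supp_invariant_of_commute (comm_K hrel n).eq.symm
  exact mono_bij_finite_id hfin hsm (frontier_invariant hsm hinv)

/-- identity (I): `f₀` and `f₁` agree at the forward `f₀`-orbit of any frontier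
point of `Supp f₁`. -/
lemma agree_on_orbit (hrel : ThompsonRel f₀ f₁) (h₀ : IsPL0 f₀) (h₁ : IsPL0 f₁) {β : ℝ}
    (hβ : β ∈ frontier (Supp f₁)) (n : ℕ) :
    f₁ ((f₀ ^ (n+1)) β) = f₀ ((f₀ ^ (n+1)) β) := by
  have hx : (f₀ ^ (n+1)) β ∈ frontier (Supp (KK f₀ f₁ (n+1))) := by
    rw [supp_KK, ← image_frontier_perm _ (isPL0_pow h₀ (n+1)).1]
    exact ⟨β, hβ, rfl⟩
  have := h_fix_frontier hrel h₀ h₁ n _ hx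
  have h2 : f₁⁻¹ (f₀ ((f₀ ^ (n+1)) β)) = (f₀ ^ (n+1)) β := this
  have h3 := congrArg (⇑f₁) h2
  rw [f₁.apply_inv_self] at h3
  exact h3.symm

/-- identity (II): `f₁` fixes the backward `f₀`-orbit of any frontier point of
`Supp h`. -/
lemma fix_on_orbit (hrel : ThompsonRel f₀ f₁) (h₀ : IsPL0 f₀) (h₁ : IsPL0 f₁) {v : ℝ}
    (hv : v ∈ frontier (Supp (hh f₀ f₁))) (n : ℕ) :
    f₁ ((f₀ ^ (n+1))⁻¹ v) = (f₀ ^ (n+1))⁻¹ v := by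
  have h2 : (f₀^(n+1)) (f₁ ((f₀^(n+1))⁻¹ v)) = v := K_fix_frontier hrel h₀ h₁ n v hv
  have := congrArg (⇑(f₀^(n+1))⁻¹) h2
  rwa [(f₀^(n+1)).inv_apply_self] at this

/-! ### Commuting on a component of `Supp h` -/

lemma slope_pos_on {g : ℝ → ℝ} (hm : StrictMono g) {w e s t : ℝ} (hwe : w < e)
    (h : ∀ y ∈ Ioo w e, g y = s * y + t) : 0 < s := by
  set y₁ := w + (e - w)/3 with hy₁
  set y₂ := w + (e - w)/2 with hy₂
  have h₁ : y₁ ∈ Ioo w e := ⟨by rw [hy₁]; linarith, by rw [hy₁]; linarith⟩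
  have h₂ : y₂ ∈ Ioo w e := ⟨by rw [hy₂]; linarith, by rw [hy₂]; linarith⟩
  have hlt : y₁ < y₂ := by rw [hy₁, hy₂]; linarith
  have := hm hlt
  rw [h y₁ h₁, h y₂ h₂] at this
  nlinarith

lemma affine_comm_near (KA KB : ℝ → ℝ) {Q wA wB sA tA sB tB : ℝ}
    (hwA : wA < Q) (hwB : wB < Q)
    (hA : ∀ y ∈ Ioo wA Q, KA y = sA * y + tA) (hB : ∀ y ∈ Ioo wB Q, KB y = sB * y + tB)
    (hAQ : sA * Q + tA = Q) (hBQ : sB * Q + tB = Q) (hsA : 0 < sA) (hsB : 0 < sB) :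
    ∃ W, W < Q ∧ ∀ y ∈ Ioo W Q, KA (KB y) = KB (KA y) := by
  set δ := min (min (Q - wA) (Q - wB)) (min ((Q - wA)/sB) ((Q - wB)/sA)) with hδ
  have hδpos : 0 < δ := by
    apply lt_min (lt_min (by linarith) (by linarith))
    exact lt_min (div_pos (by linarith) hsB) (div_pos (by linarith) hsA)
  refine ⟨Q - δ, by linarith, ?_⟩
  intro y hy
  have hyA : y ∈ Ioo wA Q := by
    constructor
    · have : δ ≤ Q - wA := le_trans (min_le_left _ _) (min_le_left _ _)
      have := hy.1; simp only [mem_Ioo] at *; linarith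
    · exact hy.2
  have hyB : y ∈ Ioo wB Q := by
    constructor
    · have : δ ≤ Q - wB := le_trans (min_le_left _ _) (min_le_right _ _)
      have := hy.1; linarith
    · exact hy.2
  have hKBy : KB y ∈ Ioo wA Q := by
    rw [hB y hyB]
    constructor
    · have h1 : δ ≤ (Q - wA)/sB := le_trans (min_le_right _ _) (min_le_left _ _)
      have h2 : Q - y < δ := by have := hy.1; linarith
      have h3 : sB * (Q - y) < sB * ((Q - wA)/sB) := by
        apply mul_lt_mul_of_pos_left _ hsB
        linarith
      rw [mul_div_cancel₀ _ (ne_of_gt hsB)] at h3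
      nlinarith
    · nlinarith [hy.2, mul_pos hsB (show (0:ℝ) < Q - y by linarith [hy.2])]
  have hKAy : KA y ∈ Ioo wB Q := by
    rw [hA y hyA]
    constructor
    · have h1 : δ ≤ (Q - wB)/sA := le_trans (min_le_right _ _) (min_le_right _ _)
      have h2 : Q - y < δ := by have := hy.1; linarith
      have h3 : sA * (Q - y) < sA * ((Q - wB)/sA) := by
        apply mul_lt_mul_of_pos_left _ hsA
        linarith
      rw [mul_div_cancel₀ _ (ne_of_gt hsA)] at h3
      nlinarith
    · nlinarith [hy.2, mul_pos hsA (show (0:ℝ) < Q - y by linarith [hy.2])]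
  rw [hA _ hKBy, hB _ hKAy, hB _ hyB, hA _ hyA]
  nlinarith [hAQ, hBQ]

/-- On a component `(P,Q)` of `Supp h` with frontier endpoints, all the `Kₙ` (n ≥ 1)
commute pointwise. -/
lemma comm_on_component (hrel : ThompsonRel f₀ f₁) (h₀ : IsPL0 f₀) (h₁ : IsPL0 f₁)
    {P Q : ℝ} (hPQ : P < Q)
    (hPf : P ∈ frontier (Supp (hh f₀ f₁))) (hQf : Q ∈ frontier (Supp (hh f₀ f₁)))
    (hV : Ioo P Q ⊆ Supp (hh f₀ f₁)) (n m : ℕ) :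
    ∀ y ∈ Ioo P Q, KK f₀ f₁ (n+1) (KK f₀ f₁ (m+1) y) = KK f₀ f₁ (m+1) (KK f₀ f₁ (n+1) y) := by
  set KA := KK f₀ f₁ (n+1) with hKA
  set KB := KK f₀ f₁ (m+1) with hKB
  have hplA : IsPL0 KA := isPL0_KK h₀ h₁ (n+1)
  have hplB : IsPL0 KB := isPL0_KK h₀ h₁ (m+1)
  have hA_Q : KA Q = Q := K_fix_frontier hrel h₀ h₁ n Q hQf
  have hB_Q : KB Q = Q := K_fix_frontier hrel h₀ h₁ m Q hQf
  have hA_P : KA P = P := K_fix_frontier hrel h₀ h₁ n P hPf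
  have hB_P : KB P = P := K_fix_frontier hrel h₀ h₁ m P hPf
  -- affine zones at Q⁻
  obtain ⟨BA, hBA⟩ := hplA.2.2.2
  obtain ⟨BB, hBB⟩ := hplB.2.2.2
  obtain ⟨wA, hwA, sA, tA, hzA⟩ := pl_affine_left ⇑KA BA hBA Q
  obtain ⟨wB, hwB, sB, tB, hzB⟩ := pl_affine_left ⇑KB BB hBB Q
  have hsA : 0 < sA := slope_pos_on hplA.1 hwA hzA
  have hsB : 0 < sB := slope_pos_on hplB.1 hwB hzB
  have heA : sA * Q + tA = Q := by
    rw [← affine_extend_right ⇑KA (cont_of_sm KA hplA.1) hwA hzA]; exact hA_Q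
  have heB : sB * Q + tB = Q := by
    rw [← affine_extend_right ⇑KB (cont_of_sm KB hplB.1) hwB hzB]; exact hB_Q
  obtain ⟨W, hWQ, hnear⟩ := affine_comm_near ⇑KA ⇑KB hwA hwB hzA hzB heA heB hsA hsB
  -- the element by which we push towards Q
  have hhP : hh f₀ f₁ P = P := frontier_fixed (isPL0_hh h₀ h₁) hPf
  have hhQ : hh f₀ f₁ Q = Q := frontier_fixed (isPL0_hh h₀ h₁) hQf
  have hfpfV : ∀ y ∈ Ioo P Q, hh f₀ f₁ y ≠ y := fun y hy => hV hy
  set m₀ := (P + Q)/2 with hm₀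
  have hm₀io : m₀ ∈ Ioo P Q := ⟨by rw [hm₀]; linarith, by rw [hm₀]; linarith⟩
  have hsmhh : StrictMono ⇑(hh f₀ f₁) := (isPL0_hh h₀ h₁).1
  -- choose `g` pushing up on (P,Q)
  obtain ⟨g, hgsm, hgQ, hgup, hcommA, hcommB⟩ :
      ∃ g : Equiv.Perm ℝ, StrictMono ⇑g ∧ g Q = Q ∧ (∀ y ∈ Ioo P Q, y < g y) ∧
        Commute g KA ∧ Commute g KB := by
    rcases lt_or_gt_of_ne (hfpfV m₀ hm₀io) with hlt | hgt
    · -- hh m₀ < m₀ : use hh⁻¹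
      refine ⟨(hh f₀ f₁)⁻¹, sm_inv _ hsmhh, fix_inv _ hhQ, ?_, (comm_K hrel n).inv_left,
        (comm_K hrel m).inv_left⟩
      intro y hy
      have : hh f₀ f₁ y < y := by
        rcases lt_or_gt_of_ne (hfpfV y hy) with h | h
        · exact h
        · exact absurd (sign_const ⇑(hh f₀ f₁) (cont_of_sm _ hsmhh) hfpfV hy hm₀io h) (by linarith)
      have := (sm_inv _ hsmhh) this
      rwa [(hh f₀ f₁).inv_apply_self] at this
    · refine ⟨hh f₀ f₁, hsmhh, hhQ, ?_, comm_K hrel n, comm_K hrel m⟩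
      intro y hy
      exact sign_const ⇑(hh f₀ f₁) (cont_of_sm _ hsmhh) hfpfV hm₀io hy hgt
  -- conclude pointwise commutation on all of (P,Q)
  intro y hy
  set W' := max W P with hW'
  have hW'Q : W' < Q := max_lt hWQ hPQ
  obtain ⟨k, hk1, hk2⟩ := orbit_escape ⇑g (cont_of_sm g hgsm) hgsm hgQ hy.2
    (fun z hz1 hz2 => hgup z ⟨lt_of_lt_of_le hy.1 hz1, hz2⟩) (max W' y) (max_lt hW'Q hy.2)
  have hgky : (⇑g)^[k] y ∈ Ioo W Q :=
    ⟨lt_of_le_of_lt (le_trans (le_max_left W P) (le_max_left W' y)) hk1, hk2⟩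
  have hnear2 : KA (KB ((⇑g)^[k] y)) = KB (KA ((⇑g)^[k] y)) := hnear _ hgky
  have c1 : Commute (g^k) (KA * KB) := (hcommA.mul_right hcommB).pow_left k
  have c2 : Commute (g^k) (KB * KA) := (hcommB.mul_right hcommA).pow_left k
  have e1 : (g^k) ((KA * KB) y) = (KA * KB) ((g^k) y) := by
    have := congrArg (fun p : Equiv.Perm ℝ => p y) c1.eq
    simpa using this
  have e2 : (g^k) ((KB * KA) y) = (KB * KA) ((g^k) y) := by
    have := congrArg (fun p : Equiv.Perm ℝ => p y) c2.eq
    simpa using this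
  have e3 : (KA * KB) ((g^k) y) = (KB * KA) ((g^k) y) := by
    show KA (KB ((g^k) y)) = KB (KA ((g^k) y))
    rw [show ((g^k) y) = (⇑g)^[k] y from rfl]
    exact hnear2
  have e4 : (g^k) ((KA*KB) y) = (g^k) ((KB*KA) y) := by rw [e1, e2, e3]
  have e5 := (g^k).injective e4
  simpa [Equiv.Perm.mul_apply] using e5

/-- generic two-sided monotone orbit limit for a permutation -/
lemma orbit_limit_perm (g : Equiv.Perm ℝ) (hcont : Continuous ⇑g) (hm : Monotone ⇑g)
    (x lo hi : ℝ) (hlo : g lo = lo) (hhi : g hi = hi) (h1 : lo ≤ x) (h2 : x ≤ hi) :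
    ∃ L, g L = L ∧ lo ≤ L ∧ L ≤ hi ∧ Tendsto (fun n => (⇑g)^[n] x) atTop (nhds L) := by
  rcases le_total x (g x) with hc | hc
  · obtain ⟨L, hL, hxL, hLhi, htd, _⟩ :=
      fix_of_orbit_sup ⇑g hcont hm hc (orbit_le_of_fix ⇑g hm hhi h2)
    exact ⟨L, hL, le_trans h1 hxL, hLhi, htd⟩
  · obtain ⟨L, hL, hLx, hloL, htd, _⟩ :=
      fix_of_orbit_inf ⇑g hcont hm hc (orbit_ge_of_fix ⇑g hm hlo h1)
    exact ⟨L, hL, hloL, le_trans hLx h2, htd⟩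

lemma conj_zone (hrel : ThompsonRel f₀ f₁) (h₀ : IsPL0 f₀) (h₁ : IsPL0 f₁)
    {P Q : ℝ} (hPQ : P < Q)
    (hPf : P ∈ frontier (Supp (hh f₀ f₁))) (hQf : Q ∈ frontier (Supp (hh f₀ f₁)))
    (hV : Ioo P Q ⊆ Supp (hh f₀ f₁)) (m : ℕ) {y : ℝ}
    (hy : (f₀ ^ (m+1)) y ∈ Ioo P Q) :
    f₁ (KK f₀ f₁ 1 y) = KK f₀ f₁ 1 (f₁ y) := by
  have hcz := comm_on_component hrel h₀ h₁ hPQ hPf hQf hV m (m+1) _ hy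
  have eB : KK f₀ f₁ (m+1+1) = f₀^(m+1) * KK f₀ f₁ 1 * (f₀^(m+1))⁻¹ := by
    rw [KK_one]
    show f₀^(m+1+1) * f₁ * (f₀^(m+1+1))⁻¹ = _
    rw [pow_succ f₀ (m+1)]
    group
  have eA : KK f₀ f₁ (m+1) = f₀^(m+1) * f₁ * (f₀^(m+1))⁻¹ := rfl
  rw [eA, eB] at hcz
  simp only [Equiv.Perm.mul_apply, Equiv.Perm.inv_apply_self] at hcz
  exact (f₀^(m+1)).injective hcz

end Rel

/-- the endgame: given a fixed point of `f₀` in a `g`-fixed-point-free interval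
such that `Fix f₀` is `g`-stable, everything in the interval is `f₀`-fixed. -/
lemma machine_end (f₀ : Equiv.Perm ℝ) (h₀pl : IsPL0 f₀) (g : Equiv.Perm ℝ)
    (hgsm : StrictMono ⇑g) (hgcont : Continuous ⇑g)
    {b d : ℝ} (hbd : b < d) (hgb : g b = b) (hgd : g d = d)
    (hgup : ∀ y ∈ Ioo b d, y < g y)
    (hstep : ∀ z ∈ Ioo b d, f₀ z = z → f₀ (g z) = g z)
    (hback : ∀ z ∈ Ioo b d, f₀ z = z → f₀ (g⁻¹ z) = g⁻¹ z)
    {s₀ : ℝ} (hs₀ : f₀ s₀ = s₀) (hs₀m : s₀ ∈ Ioo b d)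
    {x : ℝ} (hx : x ∈ Ioo b d) : f₀ x = x := by
  have hchain : ∀ k, (⇑g)^[k] s₀ ∈ Ioo b d ∧ f₀ ((⇑g)^[k] s₀) = (⇑g)^[k] s₀ := by
    intro k
    induction k with
    | zero => exact ⟨hs₀m, hs₀⟩
    | succ k ih =>
        rw [Function.iterate_succ_apply']
        exact ⟨mem_interval_map g hgsm hgb hgd ih.1, hstep _ ih.1 ih.2⟩
  obtain ⟨B₀, hB₀⟩ := h₀pl.2.2.2
  obtain ⟨w₀, hw₀, s, t, hzone⟩ := pl_affine_left ⇑f₀ B₀ hB₀ d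
  have hwsd : max w₀ b < d := max_lt hw₀ hbd
  obtain ⟨k, hk1, hk2⟩ := orbit_escape ⇑g hgcont hgsm hgd hs₀m.2
    (fun y hy1 hy2 => hgup y ⟨lt_of_lt_of_le hs₀m.1 hy1, hy2⟩) (max w₀ b) hwsd
  have hx₁ := hchain k
  have hx₂fix : f₀ (g ((⇑g)^[k] s₀)) = g ((⇑g)^[k] s₀) := hstep _ hx₁.1 hx₁.2
  have hx₁z : (⇑g)^[k] s₀ ∈ Ioo w₀ d := ⟨lt_of_le_of_lt (le_max_left _ _) hk1, hk2⟩
  have hgup₁ := hgup _ hx₁.1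
  have hx₂z : g ((⇑g)^[k] s₀) ∈ Ioo w₀ d :=
    ⟨lt_trans hx₁z.1 hgup₁, (mem_interval_map g hgsm hgb hgd hx₁.1).2⟩
  have hid := id_of_two_fixed ⇑f₀ hzone hx₁z hx₂z (ne_of_lt hgup₁) hx₁.2 hx₂fix
  obtain ⟨k', hk1', hk2'⟩ := orbit_escape ⇑g hgcont hgsm hgd hx.2
    (fun y hy1 hy2 => hgup y ⟨lt_of_lt_of_le hx.1 hy1, hy2⟩) (max w₀ b) hwsd
  have htrans : ∀ j (z : ℝ), z ∈ Ioo b d → f₀ ((⇑g)^[j] z) = (⇑g)^[j] z → f₀ z = z := by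
    intro j
    induction j with
    | zero => intro z _ h; exact h
    | succ j ih =>
        intro z hz hfix
        rw [Function.iterate_succ_apply] at hfix
        have hgz : g z ∈ Ioo b d := mem_interval_map g hgsm hgb hgd hz
        have h1 := ih (g z) hgz hfix
        have h2 := hback (g z) hgz h1
        rwa [g.inv_apply_self] at h2
  exact htrans k' x hx (hid _ ⟨lt_of_le_of_lt (le_max_left _ _) hk1', hk2'⟩)

section Rel2

variable {f₀ f₁ : Equiv.Perm ℝ}

/-- The main contradiction machine. -/
lemma machine (hrel : ThompsonRel f₀ f₁) (h₀ : IsPL0 f₀) (h₁ : IsPL0 f₁)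
    {a c b d P Q s₀ : ℝ}
    (hac : a < c) (hfa : f₀ a = a) (hfc : f₀ c = c)
    (hup : ∀ x ∈ Ioo a c, x < f₀ x)
    (hbd : b < d) (hba : b ≤ a) (hcd : c ≤ d)
    (hf1b : f₁ b = b) (hf1d : f₁ d = d) (hUbd : Ioo b d ⊆ Supp f₁)
    (hPQ : P < Q) (hPf : P ∈ frontier (Supp (hh f₀ f₁))) (hQf : Q ∈ frontier (Supp (hh f₀ f₁)))
    (hV : Ioo P Q ⊆ Supp (hh f₀ f₁))
    (hPa : P ≤ a) (hQc : c ≤ Q)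
    (hs₀ : f₀ s₀ = s₀) (hs₀m : s₀ ∈ Ioo b d) : False := by
  have sm₀ := h₀.1
  have sm₁ := h₁.1
  have cont₀ := cont_of_sm f₀ sm₀
  have cont₁ := cont_of_sm f₁ sm₁
  have sminv₀ := sm_inv f₀ sm₀
  have continv₀ := cont_of_sm f₀⁻¹ sminv₀
  have hf00 : f₀ 0 = 0 := h₀.2.1 0 le_rfl
  have hf01 : f₀ 1 = 1 := h₀.2.2.1 1 le_rfl
  have hP01 := frontier_supp_subset (isPL0_hh h₀ h₁) hPf
  have hQ01 := frontier_supp_subset (isPL0_hh h₀ h₁) hQf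
  -- orbit limits of P and Q under f₀⁻¹
  have horb : ∀ n : ℕ, ∀ x : ℝ, (⇑f₀⁻¹)^[n+1] x = (f₀^(n+1))⁻¹ x := by
    intro n x
    rw [← Equiv.Perm.coe_pow, inv_pow]
  obtain ⟨Pi, hPifix, hPilo, hPihi, hPitd⟩ := orbit_limit_perm f₀⁻¹ continv₀ sminv₀.monotone
    P 0 a (fix_inv f₀ hf00) (fix_inv f₀ hfa) hP01.1 hPa
  obtain ⟨Qi, hQifix, hQilo, hQihi, hQitd⟩ := orbit_limit_perm f₀⁻¹ continv₀ sminv₀.monotone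
    Q c 1 (fix_inv f₀ hfc) (fix_inv f₀ hf01) hQc hQ01.2
  have hPif₀ : f₀ Pi = Pi := by
    have := congrArg ⇑f₀ hPifix
    rw [f₀.apply_inv_self] at this
    exact this.symm
  have hQif₀ : f₀ Qi = Qi := by
    have := congrArg ⇑f₀ hQifix
    rw [f₀.apply_inv_self] at this
    exact this.symm
  have hfixlim : ∀ (x L : ℝ), x ∈ frontier (Supp (hh f₀ f₁)) →
      Tendsto (fun n => (⇑f₀⁻¹)^[n] x) atTop (nhds L) → f₁ L = L := by
    intro x L hxf htd
    have htd2 : Tendsto (fun n => (⇑f₀⁻¹)^[n+1] x) atTop (nhds L) :=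
      htd.comp (tendsto_add_atTop_nat 1)
    have h1 : Tendsto (fun n => f₁ ((⇑f₀⁻¹)^[n+1] x)) atTop (nhds (f₁ L)) :=
      (cont₁.tendsto _).comp htd2
    have h2 : (fun n => f₁ ((⇑f₀⁻¹)^[n+1] x)) = fun n => (⇑f₀⁻¹)^[n+1] x := by
      funext n
      rw [horb]
      exact fix_on_orbit hrel h₀ h₁ hxf n
    rw [h2] at h1
    exact tendsto_nhds_unique h1 htd2
  have hPif₁ : f₁ Pi = Pi := hfixlim P Pi hPf hPitd
  have hQif₁ : f₁ Qi = Qi := hfixlim Q Qi hQf hQitd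
  have hPib : Pi ≤ b := by
    by_contra hgt
    push_neg at hgt
    exact hUbd ⟨hgt, lt_of_le_of_lt hPihi (lt_of_lt_of_le hac hcd)⟩ hPif₁
  have hQid : d ≤ Qi := by
    by_contra hgt
    push_neg at hgt
    exact hUbd ⟨lt_of_le_of_lt hba (lt_of_lt_of_le hac hQilo), hgt⟩ hQif₁
  have hI : Ioo b d ⊆ Ioo Pi Qi :=
    fun x hx => ⟨lt_of_le_of_lt hPib hx.1, lt_of_lt_of_le hx.2 hQid⟩
  -- covering of (Pi, Qi) by the pulled-back component
  have hcover : ∀ y ∈ Ioo Pi Qi, ∃ k, (f₀^(k+1)) y ∈ Ioo P Q := by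
    intro y hy
    have e1 : ∀ᶠ n : ℕ in atTop, (⇑f₀⁻¹)^[n+1] P ∈ Iio y :=
      (hPitd.comp (tendsto_add_atTop_nat 1)).eventually (eventually_mem_set.2 (Iio_mem_nhds hy.1))
    have e2 : ∀ᶠ n : ℕ in atTop, (⇑f₀⁻¹)^[n+1] Q ∈ Ioi y :=
      (hQitd.comp (tendsto_add_atTop_nat 1)).eventually (eventually_mem_set.2 (Ioi_mem_nhds hy.2))
    obtain ⟨k, hk1, hk2⟩ := (e1.and e2).exists
    rw [mem_Iio, horb] at hk1
    rw [mem_Ioi, horb] at hk2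
    refine ⟨k, ?_, ?_⟩
    · have := (isPL0_pow h₀ (k+1)).1 hk1
      rwa [(f₀^(k+1)).apply_inv_self] at this
    · have := (isPL0_pow h₀ (k+1)).1 hk2
      rwa [(f₀^(k+1)).apply_inv_self] at this
  -- K₁ = K₂ on (Pi, Qi)
  have hK1Pi : KK f₀ f₁ 1 Pi = Pi := by
    rw [KK_one]
    show f₀ (f₁ (f₀⁻¹ Pi)) = Pi
    rw [fix_inv f₀ hPif₀, hPif₁, hPif₀]
  have hK1Qi : KK f₀ f₁ 1 Qi = Qi := by
    rw [KK_one]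
    show f₀ (f₁ (f₀⁻¹ Qi)) = Qi
    rw [fix_inv f₀ hQif₀, hQif₁, hQif₀]
  have hK12 : ∀ y ∈ Ioo Pi Qi, KK f₀ f₁ 2 y = KK f₀ f₁ 1 y := by
    intro y hy
    have hz : f₁⁻¹ y ∈ Ioo Pi Qi :=
      mem_interval_map f₁⁻¹ (sm_inv f₁ sm₁) (fix_inv f₁ hPif₁) (fix_inv f₁ hQif₁) hy
    obtain ⟨k, hk⟩ := hcover _ hz
    have hcz := conj_zone hrel h₀ h₁ hPQ hPf hQf hV k hk
    have e2 : KK f₀ f₁ 2 = f₁ * KK f₀ f₁ 1 * f₁⁻¹ := by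
      simpa using conj_f1 (comm_K1 hrel)
    rw [e2]
    show f₁ (KK f₀ f₁ 1 (f₁⁻¹ y)) = KK f₀ f₁ 1 y
    rw [hcz, f₁.apply_inv_self]
  -- stability of Fix f₀ inside (Pi, Qi) under f₁ and f₁⁻¹
  have hpow2 : (f₀^2 : Equiv.Perm ℝ) = f₀ * f₀ := by rw [pow_two]
  have hstep_up : ∀ z ∈ Ioo Pi Qi, f₀ z = z → f₀ (f₁ z) = f₁ z := by
    intro z hz hfz
    have h1 : KK f₀ f₁ 1 z = f₀ (f₁ z) := by
      rw [KK_one]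
      show f₀ (f₁ (f₀⁻¹ z)) = _
      rw [fix_inv f₀ hfz]
    have h2 : KK f₀ f₁ 2 z = f₀ (f₀ (f₁ z)) := by
      show (f₀^2 * f₁ * (f₀^2)⁻¹) z = _
      rw [hpow2]
      show (f₀ * f₀) (f₁ ((f₀ * f₀)⁻¹ z)) = _
      have hzz : (f₀ * f₀)⁻¹ z = z := by
        rw [mul_inv_rev]
        show f₀⁻¹ (f₀⁻¹ z) = z
        rw [fix_inv f₀ hfz, fix_inv f₀ hfz]
      rw [hzz]
      rfl
    have := hK12 z hz
    rw [h1, h2] at this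
    exact f₀.injective this
  have hstep_down : ∀ z ∈ Ioo Pi Qi, f₀ z = z → f₀ (f₁⁻¹ z) = f₁⁻¹ z := by
    intro z hz hfz
    have hu : (KK f₀ f₁ 1)⁻¹ z ∈ Ioo Pi Qi :=
      mem_interval_map (KK f₀ f₁ 1)⁻¹ (sm_inv _ (isPL0_KK h₀ h₁ 1).1)
        (fix_inv _ hK1Pi) (fix_inv _ hK1Qi) hz
    have h3 : KK f₀ f₁ 2 ((KK f₀ f₁ 1)⁻¹ z) = z := by
      rw [hK12 _ hu]
      exact (KK f₀ f₁ 1).apply_inv_self z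
    have h4 : (KK f₀ f₁ 2)⁻¹ z = (KK f₀ f₁ 1)⁻¹ z := by
      apply (KK f₀ f₁ 2).injective
      rw [(KK f₀ f₁ 2).apply_inv_self, h3]
    have h5 : (KK f₀ f₁ 1)⁻¹ z = f₀ (f₁⁻¹ z) := by
      apply (KK f₀ f₁ 1).injective
      rw [(KK f₀ f₁ 1).apply_inv_self, KK_one]
      symm
      show f₀ (f₁ (f₀⁻¹ (f₀ (f₁⁻¹ z)))) = z
      rw [f₀.inv_apply_self, f₁.apply_inv_self, hfz]
    have h6 : (KK f₀ f₁ 2)⁻¹ z = f₀ (f₀ (f₁⁻¹ z)) := by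
      apply (KK f₀ f₁ 2).injective
      rw [(KK f₀ f₁ 2).apply_inv_self]
      symm
      show (f₀^2 * f₁ * (f₀^2)⁻¹) (f₀ (f₀ (f₁⁻¹ z))) = z
      rw [hpow2]
      show (f₀ * f₀) (f₁ ((f₀ * f₀)⁻¹ (f₀ (f₀ (f₁⁻¹ z))))) = z
      have hzz : (f₀ * f₀)⁻¹ (f₀ (f₀ (f₁⁻¹ z))) = f₁⁻¹ z := by
        rw [mul_inv_rev]
        show f₀⁻¹ (f₀⁻¹ (f₀ (f₀ (f₁⁻¹ z)))) = f₁⁻¹ z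
        rw [f₀.inv_apply_self, f₀.inv_apply_self]
      rw [hzz, f₁.apply_inv_self]
      show f₀ (f₀ z) = z
      rw [hfz, hfz]
    have h7 := h4
    rw [h5, h6] at h7
    exact f₀.injective h7
  -- endgame
  have hfpfU : ∀ y ∈ Ioo b d, f₁ y ≠ y := fun y hy => hUbd hy
  have hxm : (a+c)/2 ∈ Ioo b d :=
    ⟨lt_of_le_of_lt hba (by linarith), lt_of_lt_of_le (by linarith) hcd⟩
  have key : f₀ ((a+c)/2) = (a+c)/2 := by
    rcases lt_or_gt_of_ne (hfpfU s₀ hs₀m) with hτ | hσ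
    · -- f₁ < id on (b,d) : take g = f₁⁻¹
      have hup' : ∀ y ∈ Ioo b d, y < f₁⁻¹ y := by
        intro y hy
        have h2 : f₁ y < y := by
          rcases lt_or_gt_of_ne (hfpfU y hy) with h | h
          · exact h
          · exact absurd (sign_const ⇑f₁ cont₁ hfpfU hy hs₀m h) (by linarith)
        have h3 := (sm_inv f₁ sm₁) h2
        rwa [f₁.inv_apply_self] at h3
      exact machine_end f₀ h₀ f₁⁻¹ (sm_inv f₁ sm₁) (cont_of_sm f₁⁻¹ (sm_inv f₁ sm₁)) hbd
        (fix_inv f₁ hf1b) (fix_inv f₁ hf1d) hup'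
        (fun z hz hfz => hstep_down z (hI hz) hfz)
        (fun z hz hfz => by rw [inv_inv]; exact hstep_up z (hI hz) hfz)
        hs₀ hs₀m hxm
    · exact machine_end f₀ h₀ f₁ sm₁ cont₁ hbd hf1b hf1d
        (fun y hy => sign_const ⇑f₁ cont₁ hfpfU hs₀m hy hσ)
        (fun z hz hfz => hstep_up z (hI hz) hfz)
        (fun z hz hfz => hstep_down z (hI hz) hfz)
        hs₀ hs₀m hxm
  exact absurd (hup ((a+c)/2) ⟨by linarith, by linarith⟩) (by rw [key]; exact lt_irrefl _)

lemma mem_V_iff (f₀ f₁ : Equiv.Perm ℝ) (x : ℝ) :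
    x ∈ Supp (hh f₀ f₁) ↔ f₀ x ≠ f₁ x := by
  constructor
  · intro hx hcon
    apply hx
    show f₁⁻¹ (f₀ x) = x
    rw [hcon, f₁.inv_apply_self]
  · intro hne hcon
    apply hne
    have : f₁ (f₁⁻¹ (f₀ x)) = f₁ x := congrArg ⇑f₁ hcon
    rwa [f₁.apply_inv_self] at this

lemma not_mem_of_frontier {W : Set ℝ} (hW : IsOpen W) {x : ℝ} (hx : x ∈ frontier W) :
    x ∉ W := by
  intro h
  rw [frontier, hW.interior_eq] at hx
  exact hx.2 h

lemma fix_lim_fwd (hrel : ThompsonRel f₀ f₁) (h₀ : IsPL0 f₀) (h₁ : IsPL0 f₁) {β L : ℝ}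
    (hβ : β ∈ frontier (Supp f₁))
    (htd : Tendsto (fun n => (⇑f₀)^[n] β) atTop (nhds L)) : f₁ L = L := by
  have htd1 : Tendsto (fun n => (⇑f₀)^[n+1] β) atTop (nhds L) :=
    htd.comp (tendsto_add_atTop_nat 1)
  have htd2 : Tendsto (fun n => (⇑f₀)^[n+2] β) atTop (nhds L) :=
    htd.comp (tendsto_add_atTop_nat 2)
  have h1 : Tendsto (fun n => f₁ ((⇑f₀)^[n+1] β)) atTop (nhds (f₁ L)) :=
    ((cont_of_sm f₁ h₁.1).tendsto _).comp htd1
  have heq : (fun n => f₁ ((⇑f₀)^[n+1] β)) = fun n => (⇑f₀)^[n+2] β := by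
    funext n
    have ha := agree_on_orbit hrel h₀ h₁ hβ n
    rw [show (⇑f₀)^[n+1] β = (f₀^(n+1)) β from rfl, ha]
    rw [show (n+2) = (n+1)+1 from rfl, Function.iterate_succ_apply']
    rfl
  rw [heq] at h1
  exact tendsto_nhds_unique h1 htd2

lemma part2_of_part1 (h₁ : IsPL0 f₁) {a c : ℝ} (hac : a < c) (hfc : f₀ c = c)
    (hup : ∀ x ∈ Ioo a c, x < f₀ x)
    (hpart1 : ∃ p, p < c ∧ ∀ x ∈ Icc p c, f₀ x = f₁ x) :
    ∀ bn dn : ℝ, IsOrbital f₁ bn dn → Ioo bn dn ⊆ Ioo a c →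
      (∀ b d : ℝ, IsOrbital f₁ b d → Ioo b d ⊆ Ioo a c → b ≤ bn) → dn = c := by
  obtain ⟨p, hpc, hagree⟩ := hpart1
  intro bn dn horb hsub hmax
  obtain ⟨hbndn, hsupp, hfbn, hfdn⟩ := horb
  have hfc1 : f₁ c = c := by
    rw [← hagree c ⟨hpc.le, le_rfl⟩]
    exact hfc
  have hdnc : dn ≤ c := by
    by_contra hgt
    push_neg at hgt
    have h1 : max bn c < dn := max_lt hbndn hgt
    have hy : (max bn c + dn)/2 ∈ Ioo bn dn :=
      ⟨lt_of_le_of_lt (le_max_left bn c) (by linarith), by linarith⟩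
    have h2 := (hsub hy).2
    have h3 : c ≤ max bn c := le_max_right bn c
    linarith
  have hdna : a < dn := by
    have hy : (bn + dn)/2 ∈ Ioo bn dn := ⟨by linarith, by linarith⟩
    have := (hsub hy).1
    linarith
  rcases eq_or_lt_of_le hdnc with he | hlt
  · exact he
  exfalso
  have hmc : max (max p a) dn < c := max_lt (max_lt hpc hac) hlt
  have hmoved : ∀ x ∈ Ioo (max (max p a) dn) c, f₁ x ≠ x := by
    intro x hx
    have hxa : x ∈ Ioo a c :=
      ⟨lt_of_le_of_lt (le_trans (le_max_right p a) (le_max_left _ _)) hx.1, hx.2⟩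
    have heq : f₀ x = f₁ x := hagree x
      ⟨le_trans (le_trans (le_max_left p a) (le_max_left _ _)) hx.1.le, hx.2.le⟩
    rw [← heq]
    exact ne_of_gt (hup x hxa)
  set G := {x : ℝ | dn ≤ x ∧ x ≤ max (max p a) dn ∧ f₁ x = x} with hG
  have hGcl : IsClosed G := by
    have hGeq : G = (Icc dn (max (max p a) dn)) ∩ {x | f₁ x = x} := by
      ext x
      simp only [hG, mem_setOf_eq, mem_inter_iff, mem_Icc]
      tauto
    rw [hGeq]
    exact isClosed_Icc.inter (isClosed_eq (cont_of_sm f₁ h₁.1) continuous_id)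
  have hGne : G.Nonempty := ⟨dn, le_rfl, le_max_right _ _, hfdn⟩
  have hGbdd : BddAbove G := ⟨max (max p a) dn, fun x hx => hx.2.1⟩
  have hβG : sSup G ∈ G := hGcl.csSup_mem hGne hGbdd
  have hβc : sSup G < c := lt_of_le_of_lt hβG.2.1 hmc
  have horb2 : IsOrbital f₁ (sSup G) c := by
    refine ⟨hβc, ?_, hβG.2.2, hfc1⟩
    intro x hx
    show f₁ x ≠ x
    intro hcon
    rcases le_or_gt x (max (max p a) dn) with h | h
    · have hxG : x ∈ G := ⟨le_trans hβG.1 hx.1.le, h, hcon⟩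
      exact absurd (le_csSup hGbdd hxG) (not_le.2 hx.1)
    · exact hmoved x ⟨h, hx.2⟩ hcon
  have hsub2 : Ioo (sSup G) c ⊆ Ioo a c := fun x hx =>
    ⟨lt_trans (lt_of_lt_of_le hdna hβG.1) hx.1, hx.2⟩
  have := hmax (sSup G) c horb2 hsub2
  linarith [hβG.1, hbndn]

end Rel2

end AgreeAux

open AgreeAux Set Filter

/-- Suppose `f₀, f₁ ∈ PL₀(I)` satisfy the two standard relations of Thompson's group
`F`, `(a,c)` is an orbital of `f₀` on which `f₀ x > x` (an up-bump), `(a,c)` is not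
an orbital of `f₁`, but `(a,c)` meets the support of `f₁`.  Then `f₀` and `f₁` agree
on some interval `[p,c]` with `p < c`; in particular the largest orbital `(bₙ,dₙ)`
of `f₁` contained in `(a,c)` satisfies `dₙ = c`. -/
theorem agree_near_top_endpoint (f₀ f₁ : Equiv.Perm ℝ)
    (h₀ : IsPL0 f₀) (h₁ : IsPL0 f₁) (hrel : ThompsonRel f₀ f₁) (a c : ℝ)
    (horb₀ : IsOrbital f₀ a c) (hup : ∀ x ∈ Set.Ioo a c, x < f₀ x)
    (hne : ¬ IsOrbital f₁ a c) (hmeet : (Set.Ioo a c ∩ Supp f₁).Nonempty) :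
    (∃ p : ℝ, p < c ∧ ∀ x ∈ Set.Icc p c, f₀ x = f₁ x) ∧
    ∀ bn dn : ℝ, IsOrbital f₁ bn dn → Set.Ioo bn dn ⊆ Set.Ioo a c →
      (∀ b d : ℝ, IsOrbital f₁ b d → Set.Ioo b d ⊆ Set.Ioo a c → b ≤ bn) →
      dn = c := by
  obtain ⟨hac, hsupp₀, hfa, hfc⟩ := horb₀
  have sm₀ := h₀.1
  have sm₁ := h₁.1
  have cont₀ := cont_of_sm f₀ sm₀
  have cont₁ := cont_of_sm f₁ sm₁
  have hUopen := supp_open h₁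
  have hVopen := supp_open (isPL0_hh h₀ h₁)
  have ha0 : 0 ≤ a := by
    by_contra hcon
    push_neg at hcon
    have h1 : a < min c 0 := lt_min hac hcon
    have hy : (a + min c 0)/2 ∈ Ioo a c := by
      constructor
      · linarith
      · have h2 : min c 0 ≤ c := min_le_left _ _
        linarith
    have hy0 : (a + min c 0)/2 ≤ 0 := by
      have h2 : min c 0 ≤ 0 := min_le_right _ _
      linarith
    exact absurd (hup _ hy) (by rw [h₀.2.1 _ hy0]; exact lt_irrefl _)
  have hc1 : c ≤ 1 := by
    by_contra hcon
    push_neg at hcon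
    have h1 : max a 1 < c := max_lt hac hcon
    have hy : (c + max a 1)/2 ∈ Ioo a c := by
      constructor
      · have := le_max_left a 1
        linarith
      · linarith
    have hy1 : (1:ℝ) ≤ (c + max a 1)/2 := by
      have := le_max_right a 1
      linarith
    exact absurd (hup _ hy) (by rw [h₀.2.2.1 _ hy1]; exact lt_irrefl _)
  have hm1U : (-1 : ℝ) ∉ Supp f₁ := fun h => h (h₁.2.1 (-1) (by norm_num))
  have h2U : (2 : ℝ) ∉ Supp f₁ := fun h => h (h₁.2.2.1 2 (by norm_num))
  have hm1V : (-1 : ℝ) ∉ Supp (hh f₀ f₁) := by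
    intro h
    apply h
    show f₁⁻¹ (f₀ (-1)) = -1
    rw [h₀.2.1 (-1) (by norm_num)]
    exact fix_inv f₁ (h₁.2.1 (-1) (by norm_num))
  have h2V : (2 : ℝ) ∉ Supp (hh f₀ f₁) := by
    intro h
    apply h
    show f₁⁻¹ (f₀ 2) = 2
    rw [h₀.2.2.1 2 (by norm_num)]
    exact fix_inv f₁ (h₁.2.2.1 2 (by norm_num))
  have hpart1 : ∃ p, p < c ∧ ∀ x ∈ Icc p c, f₀ x = f₁ x := by
    rcases eq_or_ne (f₁ c) c with hl | hl
    · -- f₁ fixes c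
      obtain ⟨z₀, hz₀⟩ := hmeet
      have hne' : (Ioo a c ∩ Supp f₁).Nonempty := ⟨z₀, hz₀⟩
      have hbddU : BddAbove (Ioo a c ∩ Supp f₁) := ⟨c, fun y hy => hy.1.2.le⟩
      have hsc : sSup (Ioo a c ∩ Supp f₁) ≤ c := csSup_le hne' (fun y hy => hy.1.2.le)
      have has : a < sSup (Ioo a c ∩ Supp f₁) := lt_of_lt_of_le hz₀.1.1 (le_csSup hbddU hz₀)
      rcases lt_or_eq_of_le hsc with hsl | hse
      · -- support of f₁ stops before c : contradiction
        exfalso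
        set su := sSup (Ioo a c ∩ Supp f₁) with hsu
        have hgap : ∀ y ∈ Ioo su c, f₁ y = y := by
          intro y hy
          by_contra hyU
          have hmem : y ∈ Ioo a c ∩ Supp f₁ := ⟨⟨lt_trans has hy.1, hy.2⟩, hyU⟩
          exact absurd (le_csSup hbddU hmem) (not_le.2 hy.1)
        have hS1 : ⇑(hh f₀ f₁) '' Supp (KK f₀ f₁ 1) = Supp (KK f₀ f₁ 1) :=
          supp_invariant_of_commute (comm_K1 hrel).eq
        have hhsm : StrictMono ⇑(hh f₀ f₁) := (isPL0_hh h₀ h₁).1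
        have hclS1 : ⇑(hh f₀ f₁) '' closure (Supp (KK f₀ f₁ 1)) = closure (Supp (KK f₀ f₁ 1)) := by
          have h3 := ((oi _ hhsm).toHomeomorph).image_closure (Supp (KK f₀ f₁ 1))
          rw [show ⇑(oi _ hhsm).toHomeomorph = ⇑(hh f₀ f₁) from rfl] at h3
          rw [h3, hS1]
        have hsuac : su ∈ Ioo a c := ⟨has, hsl⟩
        have hmem1 : f₀ su ∈ closure (Supp (KK f₀ f₁ 1)) := by
          rw [Metric.mem_closure_iff]
          intro ε hε
          obtain ⟨δ, hδ, hδp⟩ := Metric.continuous_iff.mp cont₀ su ε hε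
          obtain ⟨u, huset, hu⟩ := exists_lt_of_lt_csSup hne' (show su - δ < su by linarith)
          refine ⟨f₀ u, ?_, ?_⟩
          · rw [supp_KK]
            exact ⟨u, huset.2, by rw [pow_one]⟩
          · have hus : u ≤ su := le_csSup hbddU huset
            have hdu : dist u su < δ := by
              rw [Real.dist_eq, abs_of_nonpos (by linarith)]
              linarith
            have := hδp u hdu
            rwa [dist_comm]
        have h2 : hh f₀ f₁ (f₀ su) ∈ closure (Supp (KK f₀ f₁ 1)) := by
          rw [← hclS1]
          exact ⟨_, hmem1, rfl⟩
        have hfs1 : f₀ su ∈ Ioo a c := ⟨lt_trans hsuac.1 (hup su hsuac), by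
          have := sm₀ hsuac.2; rwa [hfc] at this⟩
        have hq : hh f₀ f₁ (f₀ su) = f₀ (f₀ su) := by
          show f₁⁻¹ (f₀ (f₀ su)) = f₀ (f₀ su)
          apply fix_inv f₁
          apply hgap
          refine ⟨lt_trans (hup su hsuac) (hup _ hfs1), ?_⟩
          have := sm₀ hfs1.2; rwa [hfc] at this
        rw [hq] at h2
        rw [mem_closure_iff] at h2
        obtain ⟨y, hy1, hy2⟩ := h2 (Ioo (f₀ su) c) isOpen_Ioo
          ⟨hup _ hfs1, by have := sm₀ hfs1.2; rwa [hfc] at this⟩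
        rw [supp_KK] at hy2
        obtain ⟨u, huU, hud⟩ := hy2
        rw [pow_one] at hud
        apply huU
        apply hgap
        constructor
        · have h5 := hy1.1
          rw [← hud] at h5
          exact (sm₀.lt_iff_lt).mp h5
        · have h5 := hy1.2
          rw [← hud, ← hfc] at h5
          exact (sm₀.lt_iff_lt).mp h5
      · -- support of f₁ accumulates at c
        have hUfin := frontier_supp_finite h₁
        have hTfin : ((frontier (Supp f₁) ∩ Iio c) ∪ {a}).Finite :=
          (hUfin.inter_of_left _).union (finite_singleton a)
        have hTne : ((frontier (Supp f₁) ∩ Iio c) ∪ {a}).Nonempty := ⟨a, Or.inr rfl⟩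
        set wT := sSup ((frontier (Supp f₁) ∩ Iio c) ∪ {a}) with hwT
        have hw'T : wT ∈ (frontier (Supp f₁) ∩ Iio c) ∪ {a} := hTne.csSup_mem hTfin
        have hw'c : wT < c := by
          rcases hw'T with h | h
          · exact h.2
          · rw [mem_singleton_iff] at h
            rw [h]; exact hac
        have hsubU : Ioo wT c ⊆ Supp f₁ := by
          intro y hy
          by_contra hyU
          obtain ⟨z, hzset, hyz⟩ := exists_lt_of_lt_csSup hne'
            (show y < sSup (Ioo a c ∩ Supp f₁) by rw [hse]; exact hy.2)
          obtain ⟨v, hvf, hyv, hvz, _⟩ := frontier_between_left hUopen hyU hzset.2 hyz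
          have hvT : v ∈ (frontier (Supp f₁) ∩ Iio c) ∪ {a} :=
            Or.inl ⟨hvf, lt_trans hvz hzset.1.2⟩
          have := le_csSup hTfin.bddAbove hvT
          linarith [hy.1]
        have hSne : (Iio c ∩ (Supp f₁)ᶜ).Nonempty := by
          refine ⟨-1, ?_, hm1U⟩
          show (-1:ℝ) < c
          linarith
        have hSbdd : BddAbove (Iio c ∩ (Supp f₁)ᶜ) := by
          refine ⟨wT, fun x hx => ?_⟩
          by_contra hcon
          push_neg at hcon
          exact hx.2 (hsubU ⟨hcon, hx.1⟩)
        set b := sSup (Iio c ∩ (Supp f₁)ᶜ) with hb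
        have hbmem : b ∉ Supp f₁ := by
          have h3 : b ∈ closure (Iio c ∩ (Supp f₁)ᶜ) := csSup_mem_closure hSne hSbdd
          have h4 : closure (Iio c ∩ (Supp f₁)ᶜ) ⊆ (Supp f₁)ᶜ := by
            have h5 : closure (Iio c ∩ (Supp f₁)ᶜ) ⊆ closure ((Supp f₁)ᶜ) :=
              closure_mono inter_subset_right
            rwa [IsClosed.closure_eq hUopen.isClosed_compl] at h5
          exact h4 h3
        have hbw : b ≤ wT := csSup_le hSne (fun x hx => by
          by_contra hcon
          push_neg at hcon
          exact hx.2 (hsubU ⟨hcon, hx.1⟩))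
        have hbc : b < c := lt_of_le_of_lt hbw hw'c
        have hIbc : Ioo b c ⊆ Supp f₁ := by
          intro y hy
          by_contra hyU
          exact absurd (le_csSup hSbdd ⟨hy.2, hyU⟩) (not_le.2 hy.1)
        have hf1b : f₁ b = b := not_not.mp hbmem
        have hbfr : b ∈ frontier (Supp f₁) := by
          constructor
          · have h3 : b ∈ closure (Ioo b c) := by
              rw [closure_Ioo (ne_of_lt hbc)]
              exact ⟨le_rfl, hbc.le⟩
            exact closure_mono hIbc h3
          · rw [hUopen.interior_eq]
            exact hbmem
        rcases lt_trichotomy a b with hab | hab | hab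
        · -- good case : b ∈ (a,c)
          obtain ⟨B₀, hB₀⟩ := h₀.2.2.2
          obtain ⟨B₁, hB₁⟩ := h₁.2.2.2
          obtain ⟨w₀, hw₀, s0, t0, hz0⟩ := pl_affine_left ⇑f₀ B₀ hB₀ c
          obtain ⟨w₁, hw₁, s1, t1, hz1⟩ := pl_affine_left ⇑f₁ B₁ hB₁ c
          have hWc : max (max w₀ w₁) b < c := max_lt (max_lt hw₀ hw₁) hbc
          obtain ⟨k, hk1, hk2⟩ := orbit_escape ⇑f₀ cont₀ sm₀ hfc hbc
            (fun y h1 h2 => hup y ⟨lt_of_lt_of_le hab h1, h2⟩) _ hWc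
          have hx₁ac : (⇑f₀)^[k] b ∈ Ioo a c :=
            ⟨lt_trans hab (lt_of_le_of_lt (le_max_right (max w₀ w₁) b) hk1), hk2⟩
          have hy₁ac : f₀ ((⇑f₀)^[k] b) ∈ Ioo a c := ⟨lt_trans hx₁ac.1 (hup _ hx₁ac), by
            have := sm₀ hx₁ac.2; rwa [hfc] at this⟩
          have hy₂ac : f₀ (f₀ ((⇑f₀)^[k] b)) ∈ Ioo a c := ⟨lt_trans hy₁ac.1 (hup _ hy₁ac), by
            have := sm₀ hy₁ac.2; rwa [hfc] at this⟩
          have hy₁W : max w₀ w₁ < f₀ ((⇑f₀)^[k] b) :=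
            lt_trans (lt_of_le_of_lt (le_max_left _ b) hk1) (hup _ hx₁ac)
          have hy₂W : max w₀ w₁ < f₀ (f₀ ((⇑f₀)^[k] b)) := lt_trans hy₁W (hup _ hy₁ac)
          have hagree1 : f₁ (f₀ ((⇑f₀)^[k] b)) = f₀ (f₀ ((⇑f₀)^[k] b)) := by
            have ha := agree_on_orbit hrel h₀ h₁ hbfr k
            have hco : f₀ ((⇑f₀)^[k] b) = (f₀^(k+1)) b := by
              rw [← Function.iterate_succ_apply' ⇑f₀ k b]
              rfl
            rw [hco]
            exact ha
          have hagree2 : f₁ (f₀ (f₀ ((⇑f₀)^[k] b))) = f₀ (f₀ (f₀ ((⇑f₀)^[k] b))) := by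
            have ha := agree_on_orbit hrel h₀ h₁ hbfr (k+1)
            have hco : f₀ (f₀ ((⇑f₀)^[k] b)) = (f₀^(k+1+1)) b := by
              rw [show ((f₀^(k+1+1)) b : ℝ) = (⇑f₀)^[k+1+1] b from rfl]
              rw [Function.iterate_succ_apply' ⇑f₀ (k+1) b, Function.iterate_succ_apply' ⇑f₀ k b]
            rw [hco]
            exact ha
          have hm₁ : f₀ ((⇑f₀)^[k] b) ∈ Ioo w₀ c :=
            ⟨lt_of_le_of_lt (le_max_left w₀ w₁) hy₁W, hy₁ac.2⟩
          have hm₂ : f₀ ((⇑f₀)^[k] b) ∈ Ioo w₁ c :=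
            ⟨lt_of_le_of_lt (le_max_right w₀ w₁) hy₁W, hy₁ac.2⟩
          have hm₃ : f₀ (f₀ ((⇑f₀)^[k] b)) ∈ Ioo w₀ c :=
            ⟨lt_of_le_of_lt (le_max_left w₀ w₁) hy₂W, hy₂ac.2⟩
          have hm₄ : f₀ (f₀ ((⇑f₀)^[k] b)) ∈ Ioo w₁ c :=
            ⟨lt_of_le_of_lt (le_max_right w₀ w₁) hy₂W, hy₂ac.2⟩
          have heq1 : s1 * (f₀ ((⇑f₀)^[k] b)) + t1 = s0 * (f₀ ((⇑f₀)^[k] b)) + t0 := by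
            rw [← hz1 _ hm₂, ← hz0 _ hm₁, hagree1]
          have heq2 : s1 * (f₀ (f₀ ((⇑f₀)^[k] b))) + t1 = s0 * (f₀ (f₀ ((⇑f₀)^[k] b))) + t0 := by
            rw [← hz1 _ hm₄, ← hz0 _ hm₃, hagree2]
          obtain ⟨hs01, ht01⟩ := affine_eq_of_two s1 t1 s0 t0 _ _
            (ne_of_lt (hup _ hy₁ac)) heq1 heq2
          refine ⟨f₀ ((⇑f₀)^[k] b), hy₁ac.2, ?_⟩
          intro x hx
          rcases lt_or_eq_of_le hx.2 with hxc | hxc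
          · have hxw₀ : x ∈ Ioo w₀ c := ⟨lt_of_lt_of_le hm₁.1 hx.1, hxc⟩
            have hxw₁ : x ∈ Ioo w₁ c := ⟨lt_of_lt_of_le hm₂.1 hx.1, hxc⟩
            rw [hz0 x hxw₀, hz1 x hxw₁, hs01, ht01]
          · rw [hxc, hfc, hl]
        · -- b = a : (a,c) is an orbital of f₁, contradiction
          exfalso
          apply hne
          refine ⟨hac, ?_, ?_, hl⟩
          · intro x hx
            exact hIbc ⟨hab ▸ hx.1, hx.2⟩
          · rw [← hab] at hf1b
            exact hf1b
        · -- b < a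
          by_cases hagr : ∃ p, p < c ∧ ∀ x ∈ Icc p c, f₀ x = f₁ x
          · exact hagr
          · exfalso
            push_neg at hagr
            have hcV : c ∉ Supp (hh f₀ f₁) := by
              intro h
              apply h
              show f₁⁻¹ (f₀ c) = c
              rw [hfc]
              exact fix_inv f₁ hl
            have haccum : ∀ δ : ℝ, 0 < δ → ∃ x, x ∈ Ioo (c - δ) c ∧ x ∈ Supp (hh f₀ f₁) := by
              intro δ hδ
              obtain ⟨x, hx1, hx2⟩ := hagr (c - δ/2) (by linarith)
              refine ⟨x, ⟨by linarith [hx1.1], ?_⟩, (mem_V_iff f₀ f₁ x).2 hx2⟩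
              rcases lt_or_eq_of_le hx1.2 with h | h
              · exact h
              · exfalso
                apply hx2
                rw [h, hfc, hl]
            have hVfin := frontier_supp_finite (isPL0_hh h₀ h₁)
            have hT'fin : ((frontier (Supp (hh f₀ f₁)) ∩ Iio c) ∪ {c - 1}).Finite :=
              (hVfin.inter_of_left _).union (finite_singleton _)
            have hT'ne : ((frontier (Supp (hh f₀ f₁)) ∩ Iio c) ∪ {c - 1}).Nonempty :=
              ⟨c - 1, Or.inr rfl⟩
            set wV := sSup ((frontier (Supp (hh f₀ f₁)) ∩ Iio c) ∪ {c - 1}) with hwV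
            have hwT' : wV ∈ (frontier (Supp (hh f₀ f₁)) ∩ Iio c) ∪ {c - 1} :=
              hT'ne.csSup_mem hT'fin
            have hw'cV : wV < c := by
              rcases hwT' with h | h
              · exact h.2
              · rw [mem_singleton_iff] at h
                rw [h]; linarith
            have hsubV : Ioo wV c ⊆ Supp (hh f₀ f₁) := by
              intro y hy
              by_contra hyV
              obtain ⟨z, hz1, hz2⟩ := haccum (c - y) (by linarith [hy.2])
              have hyz : y < z := by linarith [hz1.1]
              obtain ⟨v, hvf, hyv, hvz, _⟩ := frontier_between_left hVopen hyV hz2 hyz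
              have hvT : v ∈ (frontier (Supp (hh f₀ f₁)) ∩ Iio c) ∪ {c - 1} :=
                Or.inl ⟨hvf, lt_trans hvz hz1.2⟩
              have := le_csSup hT'fin.bddAbove hvT
              linarith [hy.1]
            have hS'ne : (Iio c ∩ (Supp (hh f₀ f₁))ᶜ).Nonempty := by
              refine ⟨-1, ?_, hm1V⟩
              show (-1:ℝ) < c
              linarith
            have hS'bdd : BddAbove (Iio c ∩ (Supp (hh f₀ f₁))ᶜ) := by
              refine ⟨wV, fun x hx => ?_⟩
              by_contra hcon
              push_neg at hcon
              exact hx.2 (hsubV ⟨hcon, hx.1⟩)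
            set v := sSup (Iio c ∩ (Supp (hh f₀ f₁))ᶜ) with hv
            have hvmem : v ∉ Supp (hh f₀ f₁) := by
              have h3 : v ∈ closure (Iio c ∩ (Supp (hh f₀ f₁))ᶜ) := csSup_mem_closure hS'ne hS'bdd
              have h4 : closure (Iio c ∩ (Supp (hh f₀ f₁))ᶜ) ⊆ (Supp (hh f₀ f₁))ᶜ := by
                have h5 : closure (Iio c ∩ (Supp (hh f₀ f₁))ᶜ) ⊆ closure ((Supp (hh f₀ f₁))ᶜ) :=
                  closure_mono inter_subset_right
                rwa [IsClosed.closure_eq hVopen.isClosed_compl] at h5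
              exact h4 h3
            have hvw : v ≤ wV := csSup_le hS'ne (fun x hx => by
              by_contra hcon
              push_neg at hcon
              exact hx.2 (hsubV ⟨hcon, hx.1⟩))
            have hvc : v < c := lt_of_le_of_lt hvw hw'cV
            have hIvc : Ioo v c ⊆ Supp (hh f₀ f₁) := by
              intro y hy
              by_contra hyV
              exact absurd (le_csSup hS'bdd ⟨hy.2, hyV⟩) (not_le.2 hy.1)
            have hvfr : v ∈ frontier (Supp (hh f₀ f₁)) := by
              constructor
              · have h3 : v ∈ closure (Ioo v c) := by
                  rw [closure_Ioo (ne_of_lt hvc)]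
                  exact ⟨le_rfl, hvc.le⟩
                exact closure_mono hIvc h3
              · rw [hVopen.interior_eq]
                exact hvmem
            have hcfr : c ∈ frontier (Supp (hh f₀ f₁)) := by
              constructor
              · have h3 : c ∈ closure (Ioo v c) := by
                  rw [closure_Ioo (ne_of_lt hvc)]
                  exact ⟨hvc.le, le_rfl⟩
                exact closure_mono hIvc h3
              · rw [hVopen.interior_eq]
                exact hcV
            have hva : v ≤ a := by
              by_contra hcon
              push_neg at hcon
              have h2 := fix_on_orbit hrel h₀ h₁ hvfr 0
              rw [show ((0:ℕ)+1) = 1 from rfl, pow_one] at h2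
              have hw : f₀⁻¹ v ∈ Ioo a c := mem_interval_map f₀⁻¹ (sm_inv f₀ sm₀)
                (fix_inv f₀ hfa) (fix_inv f₀ hfc) ⟨hcon, hvc⟩
              exact hIbc ⟨lt_trans hab hw.1, hw.2⟩ h2
            exact machine hrel h₀ h₁ hac hfa hfc hup hbc hab.le le_rfl hf1b hl hIbc
              hvc hvfr hcfr hIvc hva le_rfl hfa ⟨hab, hac⟩
    · -- f₁ c ≠ c : contradiction
      exfalso
      have hcU : c ∈ Supp f₁ := hl
      obtain ⟨b, hbf, _, hbc, hbI⟩ := frontier_between_left hUopen hm1U hcU (by linarith)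
      obtain ⟨d, hdf, _, hcd, hdI⟩ := frontier_between_right hUopen h2U hcU (by linarith)
      have hUbd : Ioo b d ⊆ Supp f₁ := by
        intro x hx
        rcases lt_trichotomy x c with h | h | h
        · exact hbI ⟨hx.1, h⟩
        · rw [h]; exact hcU
        · exact hdI ⟨h, hx.2⟩
      have hf1b : f₁ b = b := frontier_fixed h₁ hbf
      have hf1d : f₁ d = d := frontier_fixed h₁ hdf
      have hbd : b < d := lt_trans hbc hcd
      rcases le_or_gt b a with hba | hab
      · have hf0d : d ≤ f₀ d := by
          by_contra hcon
          push_neg at hcon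
          obtain ⟨L, hLfix, hLd, hcL, htd, hLle⟩ := fix_of_orbit_inf ⇑f₀ cont₀ sm₀.monotone
            hcon.le (orbit_ge_of_fix ⇑f₀ sm₀.monotone hfc hcd.le)
          have hLf1 : f₁ L = L := fix_lim_fwd hrel h₀ h₁ hdf htd
          have hLd' : L < d := lt_of_le_of_lt (by simpa using hLle 1) hcon
          exact hUbd ⟨lt_of_lt_of_le hbc hcL, hLd'⟩ hLf1
        have hf0b : f₀ b ≤ b := by
          by_contra hcon
          push_neg at hcon
          obtain ⟨L, hLfix, hbL, hLa, htd, hLge⟩ := fix_of_orbit_sup ⇑f₀ cont₀ sm₀.monotone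
            hcon.le (orbit_le_of_fix ⇑f₀ sm₀.monotone hfa hba)
          have hLf1 : f₁ L = L := fix_lim_fwd hrel h₀ h₁ hbf htd
          have hbL' : b < L := lt_of_lt_of_le hcon (by simpa using hLge 1)
          exact hUbd ⟨hbL', lt_of_le_of_lt hLa (lt_trans hac hcd)⟩ hLf1
        have hcV : c ∈ Supp (hh f₀ f₁) := by
          show f₁⁻¹ (f₀ c) ≠ c
          rw [hfc]
          intro hcon
          apply hl
          have h6 := congrArg ⇑f₁ hcon
          rw [f₁.apply_inv_self] at h6
          exact h6.symm
        have hbinv : b ≤ f₀⁻¹ b := by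
          have := (sm_inv f₀ sm₀).monotone hf0b
          rwa [f₀.inv_apply_self] at this
        have hdinv : f₀⁻¹ d ≤ d := by
          have := (sm_inv f₀ sm₀).monotone hf0d
          rwa [f₀.inv_apply_self] at this
        have hbdV : Ioo b d ⊆ Supp (hh f₀ f₁) := by
          intro x hx
          by_contra hxV
          have hfrv : ∀ v, v ∈ frontier (Supp (hh f₀ f₁)) → v ∈ Ioo b d → False := by
            intro v hvf hvm
            have h2 := fix_on_orbit hrel h₀ h₁ hvf 0
            rw [show ((0:ℕ)+1) = 1 from rfl, pow_one] at h2
            refine hUbd ⟨?_, ?_⟩ h2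
            · exact lt_of_le_of_lt hbinv ((sm_inv f₀ sm₀) hvm.1)
            · exact lt_of_lt_of_le ((sm_inv f₀ sm₀) hvm.2) hdinv
          rcases lt_trichotomy x c with h | h | h
          · obtain ⟨v, hvf, hxv, hvc, _⟩ := frontier_between_left hVopen hxV hcV h
            exact hfrv v hvf ⟨lt_of_lt_of_le hx.1 hxv, lt_trans hvc hcd⟩
          · exact hxV (h ▸ hcV)
          · obtain ⟨v, hvf, hvx, hcv, _⟩ := frontier_between_right hVopen hxV hcV h
            exact hfrv v hvf ⟨lt_trans hbc hcv, lt_of_le_of_lt hvx hx.2⟩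
        obtain ⟨P, hPf, _, hPc, hPI⟩ := frontier_between_left hVopen hm1V hcV (by linarith)
        obtain ⟨Q, hQf, _, hcQ, hQI⟩ := frontier_between_right hVopen h2V hcV (by linarith)
        have hV : Ioo P Q ⊆ Supp (hh f₀ f₁) := by
          intro x hx
          rcases lt_trichotomy x c with h | h | h
          · exact hPI ⟨hx.1, h⟩
          · rw [h]; exact hcV
          · exact hQI ⟨h, hx.2⟩
        have hPb : P ≤ b := by
          by_contra hcon
          push_neg at hcon
          exact not_mem_of_frontier hVopen hPf (hbdV ⟨hcon, lt_trans hPc hcd⟩)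
        have hQd : d ≤ Q := by
          by_contra hcon
          push_neg at hcon
          exact not_mem_of_frontier hVopen hQf (hbdV ⟨lt_trans hbc hcQ, hcon⟩)
        exact machine hrel h₀ h₁ hac hfa hfc hup hbd hba hcd.le hf1b hf1d hUbd
          (lt_trans hPc hcQ) hPf hQf hV (hPb.trans hba) hcQ.le hfc ⟨hbc, hcd⟩
      · have hbac : b ∈ Ioo a c := ⟨hab, hbc⟩
        obtain ⟨L, hLfix, hbL, hLc, htd, _⟩ := fix_of_orbit_sup ⇑f₀ cont₀ sm₀.monotone
          (hup b hbac).le (orbit_le_of_fix ⇑f₀ sm₀.monotone hfc hbc.le)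
        have hLc' : L = c := by
          rcases lt_or_eq_of_le hLc with h | h
          · exact absurd hLfix (ne_of_gt (hup L ⟨lt_of_lt_of_le hab hbL, h⟩))
          · exact h
        have hf1L := fix_lim_fwd hrel h₀ h₁ hbf htd
        rw [hLc'] at hf1L
        exact hl hf1L
  exact ⟨hpart1, part2_of_part1 h₁ hac hfc hup hpart1⟩
end

section
/- Let f₀, f₁ ∈ PL₀(I) satisfy the relations [f₀f₁⁻¹, f₀⁻¹f₁f₀] = 1 and [f₀f₁⁻¹, f₀⁻²f₁f₀²] = 1. Let (a,c) be an orbital of f₀ on which f₀(x) > x and not an orbital of f₁, and let (b₁,d₁) < ... < (bₙ,dₙ) be the orbitals of f₁ contained in (a,c). Then f₀(b₁) > bₙ. -/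
open scoped commutatorElement

open Set Filter

section Helpers

/-- strict mono of the inverse of a strictly monotone permutation -/
lemma PermAux.sm_inv (f : Equiv.Perm ℝ) (h : StrictMono ⇑f) : StrictMono ⇑f⁻¹ := by
  intro x y hxy
  apply h.lt_iff_lt.mp
  simpa using hxy

lemma PermAux.continuous (f : Equiv.Perm ℝ) (h : StrictMono ⇑f) : Continuous ⇑f := by
  have := (StrictMono.orderIsoOfSurjective ⇑f h f.surjective).continuous
  simpa using this

lemma PermAux.map_nhds (f : Equiv.Perm ℝ) (h : StrictMono ⇑f) (x : ℝ) :
    Filter.map ⇑f (nhds x) = nhds (f x) := by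
  have := (StrictMono.orderIsoOfSurjective ⇑f h f.surjective).toHomeomorph.map_nhds_eq x
  simpa using this

lemma PermAux.pow_apply (f : Equiv.Perm ℝ) : ∀ (k : ℕ) (x : ℝ), (f ^ k) x = (⇑f)^[k] x := by
  intro k
  induction k with
  | zero => intro x; simp
  | succ n ih =>
    intro x
    rw [pow_succ, Equiv.Perm.mul_apply, Function.iterate_succ_apply, ih]

lemma PermAux.sm_mul (f g : Equiv.Perm ℝ) (hf : StrictMono ⇑f) (hg : StrictMono ⇑g) :
    StrictMono ⇑(f * g) := by
  intro x y hxy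
  simp only [Equiv.Perm.mul_apply]
  exact hf (hg hxy)

lemma PermAux.sm_pow (f : Equiv.Perm ℝ) (hf : StrictMono ⇑f) (k : ℕ) :
    StrictMono ⇑(f ^ k) := by
  induction k with
  | zero => intro x y hxy; simpa using hxy
  | succ n ih =>
    have := PermAux.sm_mul _ _ ih hf
    rwa [← pow_succ] at this

lemma orbital_conj (g f : Equiv.Perm ℝ) (hg : StrictMono ⇑g) {p q : ℝ}
    (h : IsOrbital f p q) : IsOrbital (g * f * g⁻¹) (g p) (g q) := by
  obtain ⟨hlt, hsub, hp, hq⟩ := h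
  refine ⟨hg hlt, ?_, ?_, ?_⟩
  · intro x hx
    have hx1 : g⁻¹ x ∈ Set.Ioo p q := by
      constructor
      · apply hg.lt_iff_lt.mp; simpa using hx.1
      · apply hg.lt_iff_lt.mp; simpa using hx.2
    have hmoved := hsub hx1
    simp only [Supp, Set.mem_setOf_eq, Equiv.Perm.mul_apply] at hmoved ⊢
    intro hcon
    apply hmoved
    have : g⁻¹ (g (f (g⁻¹ x))) = g⁻¹ x := by rw [hcon]
    simpa using this
  · simp only [Equiv.Perm.mul_apply, Equiv.Perm.inv_def, Equiv.symm_apply_apply, hp]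
  · simp only [Equiv.Perm.mul_apply, Equiv.Perm.inv_def, Equiv.symm_apply_apply, hq]

lemma orbital_eq (f : Equiv.Perm ℝ) {p q p' q' x : ℝ} (h1 : IsOrbital f p q)
    (h2 : IsOrbital f p' q') (hx1 : x ∈ Set.Ioo p q) (hx2 : x ∈ Set.Ioo p' q') :
    p = p' ∧ q = q' := by
  have key : ∀ p q p' q' : ℝ, IsOrbital f p q → IsOrbital f p' q' →
      x ∈ Set.Ioo p q → x ∈ Set.Ioo p' q' → p' ≤ p := by
    intro p q p' q' h1 h2 hx1 hx2
    by_contra hcon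
    push_neg at hcon
    have hmem : p' ∈ Set.Ioo p q := ⟨hcon, lt_trans hx2.1 hx1.2⟩
    exact (h1.2.1 hmem) h2.2.2.1
  have key2 : ∀ p q p' q' : ℝ, IsOrbital f p q → IsOrbital f p' q' →
      x ∈ Set.Ioo p q → x ∈ Set.Ioo p' q' → q ≤ q' := by
    intro p q p' q' h1 h2 hx1 hx2
    by_contra hcon
    push_neg at hcon
    have hmem : q' ∈ Set.Ioo p q := ⟨lt_trans hx1.1 hx2.2, hcon⟩
    exact (h1.2.1 hmem) h2.2.2.2
  exact ⟨le_antisymm (key p' q' p q h2 h1 hx2 hx1) (key p q p' q' h1 h2 hx1 hx2),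
    le_antisymm (key2 p q p' q' h1 h2 hx1 hx2) (key2 p' q' p q h2 h1 hx2 hx1)⟩

lemma orbital_inv (f : Equiv.Perm ℝ) {p q : ℝ} (h : IsOrbital f p q) :
    IsOrbital f⁻¹ p q := by
  obtain ⟨hlt, hsub, hp, hq⟩ := h
  refine ⟨hlt, ?_, ?_, ?_⟩
  · intro x hx hcon
    apply hsub hx
    have : f (f⁻¹ x) = f x := by rw [hcon]
    simpa using this.symm
  · have : f⁻¹ (f p) = f⁻¹ p := by rw [hp]
    simpa using this.symm
  · have : f⁻¹ (f q) = f⁻¹ q := by rw [hq]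
    simpa using this.symm

lemma orbital_maps (f : Equiv.Perm ℝ) {p q : ℝ} (h : IsOrbital f p q)
    (hm : StrictMono ⇑f) {x : ℝ} (hx : x ∈ Set.Ioo p q) : f x ∈ Set.Ioo p q := by
  constructor
  · rw [← h.2.2.1]; exact hm hx.1
  · rw [← h.2.2.2]; exact hm hx.2

lemma orbital_down (f : Equiv.Perm ℝ) (hc : Continuous ⇑f) {p q x₁ : ℝ}
    (h : IsOrbital f p q) (hx₁ : x₁ ∈ Set.Ioo p q) (hlt : f x₁ < x₁) :
    ∀ x ∈ Set.Ioo p q, f x < x := by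
  intro x hx
  rcases lt_trichotomy (f x) x with h' | h' | h'
  · exact h'
  · exact absurd h' (h.2.1 hx)
  · exfalso
    have hcont : Continuous fun z : ℝ => f z - z := hc.sub continuous_id
    rcases le_or_gt x₁ x with hle | hlt2
    · have hiv := intermediate_value_Ioo hle (hcont.continuousOn)
      have h0 : (0 : ℝ) ∈ Set.Ioo (f x₁ - x₁) (f x - x) := ⟨by linarith, by linarith⟩
      obtain ⟨z, hz, hz0⟩ := hiv h0
      have hzfix : f z = z := by dsimp at hz0; linarith
      exact (h.2.1 ⟨lt_trans hx₁.1 hz.1, lt_trans hz.2 hx.2⟩) hzfix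
    · have hiv := intermediate_value_Ioo' (le_of_lt hlt2) (hcont.continuousOn)
      have h0 : (0 : ℝ) ∈ Set.Ioo (f x₁ - x₁) (f x - x) := ⟨by linarith, by linarith⟩
      obtain ⟨z, hz, hz0⟩ := hiv h0
      have hzfix : f z = z := by dsimp at hz0; linarith
      exact (h.2.1 ⟨lt_trans hx.1 hz.1, lt_trans hz.2 hx₁.2⟩) hzfix

lemma orbital_exists (f : Equiv.Perm ℝ) (hc : Continuous ⇑f)
    (hlow : ∀ z : ℝ, z ≤ 0 → f z = z) (hhigh : ∀ z : ℝ, 1 ≤ z → f z = z)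
    {x : ℝ} (hx : f x ≠ x) : ∃ p q, IsOrbital f p q ∧ x ∈ Set.Ioo p q := by
  have hFclosed : IsClosed {z : ℝ | f z = z} := isClosed_eq (hc) continuous_id
  set S₁ := {z : ℝ | f z = z} ∩ Set.Iic x with hS₁
  have hS₁c : IsClosed S₁ := hFclosed.inter isClosed_Iic
  have hS₁ne : S₁.Nonempty := by
    refine ⟨min x 0 - 1, hlow _ (by linarith [min_le_right x 0]), ?_⟩
    simp only [Set.mem_Iic]
    linarith [min_le_left x 0]
  have hS₁bdd : BddAbove S₁ := ⟨x, fun z hz => hz.2⟩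
  set p := sSup S₁ with hpdef
  have hpS : p ∈ S₁ := hS₁c.csSup_mem hS₁ne hS₁bdd
  have hplt : p < x := lt_of_le_of_ne hpS.2 (fun h => hx (by rw [← h]; exact hpS.1))
  set S₂ := {z : ℝ | f z = z} ∩ Set.Ici x with hS₂
  have hS₂c : IsClosed S₂ := hFclosed.inter isClosed_Ici
  have hS₂ne : S₂.Nonempty := by
    refine ⟨max x 1, hhigh _ (le_max_right x 1), le_max_left x 1⟩
  have hS₂bdd : BddBelow S₂ := ⟨x, fun z hz => hz.2⟩
  set q := sInf S₂ with hqdef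
  have hqS : q ∈ S₂ := hS₂c.csInf_mem hS₂ne hS₂bdd
  have hqgt : x < q := lt_of_le_of_ne hqS.2 (fun h => hx (by rw [h]; exact hqS.1))
  refine ⟨p, q, ⟨lt_trans hplt hqgt, ?_, hpS.1, hqS.1⟩, hplt, hqgt⟩
  intro z hz hcon
  rcases le_or_gt z x with hle | hgt
  · have : z ≤ p := le_csSup hS₁bdd ⟨hcon, hle⟩
    linarith [hz.1]
  · have : q ≤ z := csInf_le hS₂bdd ⟨hcon, le_of_lt hgt⟩
    linarith [hz.2]

lemma iter_up (f : Equiv.Perm ℝ) (hm : StrictMono ⇑f) (hc : Continuous ⇑f) {p q : ℝ}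
    (h : IsOrbital f p q) (hdir : ∀ x ∈ Set.Ioo p q, x < f x) {x₀ : ℝ}
    (hx₀ : x₀ ∈ Set.Ioo p q) :
    (∀ k, (⇑f)^[k] x₀ ∈ Set.Ioo p q) ∧ ∀ r, r < q → ∃ k, r < (⇑f)^[k] x₀ := by
  have hin : ∀ k, (⇑f)^[k] x₀ ∈ Set.Ioo p q := by
    intro k
    induction k with
    | zero => simpa using hx₀
    | succ n ih => rw [Function.iterate_succ_apply']; exact orbital_maps f h hm ih
  refine ⟨hin, ?_⟩
  have hms : Monotone fun k => (⇑f)^[k] x₀ := by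
    apply monotone_nat_of_le_succ
    intro k
    rw [Function.iterate_succ_apply']
    exact (hdir _ (hin k)).le
  have hbdd : BddAbove (Set.range fun k => (⇑f)^[k] x₀) := by
    refine ⟨q, ?_⟩
    rintro _ ⟨k, rfl⟩
    exact (hin k).2.le
  set L := ⨆ k, (⇑f)^[k] x₀ with hLdef
  have htend : Tendsto (fun k => (⇑f)^[k] x₀) atTop (nhds L) := tendsto_atTop_ciSup hms hbdd
  have htend2 : Tendsto (fun k => (⇑f)^[k + 1] x₀) atTop (nhds L) :=
    htend.comp (tendsto_add_atTop_nat 1)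
  have htend3 : Tendsto (fun k => f ((⇑f)^[k] x₀)) atTop (nhds (f L)) :=
    (hc.tendsto L).comp htend
  have heq : (fun k => f ((⇑f)^[k] x₀)) = fun k => (⇑f)^[k + 1] x₀ := by
    funext k; rw [Function.iterate_succ_apply']
  rw [heq] at htend3
  have hLfix : f L = L := tendsto_nhds_unique htend3 htend2
  have hLle : L ≤ q := ciSup_le fun k => (hin k).2.le
  have hLgt : p < L := lt_of_lt_of_le (hin 0).1 (le_ciSup hbdd 0)
  have hLq : L = q := by
    rcases lt_or_eq_of_le hLle with hlt | heq2
    · exfalso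
      have := hdir L ⟨hLgt, hlt⟩
      rw [hLfix] at this
      exact lt_irrefl _ this
    · exact heq2
  intro r hr
  have : r < ⨆ k, (⇑f)^[k] x₀ := by rw [← hLdef, hLq]; exact hr
  exact exists_lt_of_lt_ciSup this

lemma iter_down (f : Equiv.Perm ℝ) (hm : StrictMono ⇑f) (hc : Continuous ⇑f) {p q : ℝ}
    (h : IsOrbital f p q) (hdir : ∀ x ∈ Set.Ioo p q, f x < x) {x₀ : ℝ}
    (hx₀ : x₀ ∈ Set.Ioo p q) :
    (∀ k, (⇑f)^[k] x₀ ∈ Set.Ioo p q) ∧ ∀ r, p < r → ∃ k, (⇑f)^[k] x₀ < r := by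
  have hin : ∀ k, (⇑f)^[k] x₀ ∈ Set.Ioo p q := by
    intro k
    induction k with
    | zero => simpa using hx₀
    | succ n ih => rw [Function.iterate_succ_apply']; exact orbital_maps f h hm ih
  refine ⟨hin, ?_⟩
  have hms : Antitone fun k => (⇑f)^[k] x₀ := by
    apply antitone_nat_of_succ_le
    intro k
    rw [Function.iterate_succ_apply']
    exact (hdir _ (hin k)).le
  have hbdd : BddBelow (Set.range fun k => (⇑f)^[k] x₀) := by
    refine ⟨p, ?_⟩
    rintro _ ⟨k, rfl⟩
    exact (hin k).1.le
  set L := ⨅ k, (⇑f)^[k] x₀ with hLdef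
  have htend : Tendsto (fun k => (⇑f)^[k] x₀) atTop (nhds L) := tendsto_atTop_ciInf hms hbdd
  have htend2 : Tendsto (fun k => (⇑f)^[k + 1] x₀) atTop (nhds L) :=
    htend.comp (tendsto_add_atTop_nat 1)
  have htend3 : Tendsto (fun k => f ((⇑f)^[k] x₀)) atTop (nhds (f L)) :=
    (hc.tendsto L).comp htend
  have heq : (fun k => f ((⇑f)^[k] x₀)) = fun k => (⇑f)^[k + 1] x₀ := by
    funext k; rw [Function.iterate_succ_apply']
  rw [heq] at htend3
  have hLfix : f L = L := tendsto_nhds_unique htend3 htend2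
  have hLge : p ≤ L := le_ciInf fun k => (hin k).1.le
  have hLlt : L < q := lt_of_le_of_lt (ciInf_le hbdd 0) (hin 0).2
  have hLp : L = p := by
    rcases lt_or_eq_of_le hLge with hlt | heq2
    · exfalso
      have := hdir L ⟨hlt, hLlt⟩
      rw [hLfix] at this
      exact lt_irrefl _ this
    · exact heq2.symm
  intro r hr
  have : (⨅ k, (⇑f)^[k] x₀) < r := by rw [← hLdef, hLp]; exact hr
  exact exists_lt_of_ciInf_lt this

end Helpers


section PLB

def PLBrk (f : Equiv.Perm ℝ) : Prop :=
  ∃ B : Finset ℝ, ∀ x : ℝ, x ∉ B → ∃ s t : ℝ, ∀ᶠ y in nhds x, f y = s * y + t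

lemma affeq {s t s' t' x : ℝ} (h : ∀ᶠ w in nhds x, s * w + t = s' * w + t') :
    s = s' ∧ t = t' := by
  rcases Metric.eventually_nhds_iff.mp h with ⟨ε, hε, hball⟩
  have h1 : s * (x + ε / 2) + t = s' * (x + ε / 2) + t' := by
    apply hball
    rw [Real.dist_eq]
    rw [show x + ε / 2 - x = ε / 2 by ring]
    rw [abs_of_pos (by linarith)]
    linarith
  have h2 : s * (x - ε / 2) + t = s' * (x - ε / 2) + t' := by
    apply hball
    rw [Real.dist_eq]
    rw [show x - ε / 2 - x = -(ε / 2) by ring]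
    rw [abs_neg, abs_of_pos (by linarith)]
    linarith
  have hs : s = s' := by
    have hne : (ε : ℝ) ≠ 0 := ne_of_gt hε
    have : s * ε = s' * ε := by linarith
    exact mul_right_cancel₀ hne this
  exact ⟨hs, by rw [hs] at h1; linarith⟩

lemma plbrk_inv (f : Equiv.Perm ℝ) (hm : StrictMono ⇑f) (h : PLBrk f) : PLBrk f⁻¹ := by
  obtain ⟨B, hB⟩ := h
  refine ⟨B.image ⇑f, ?_⟩
  intro x hx
  set w := f⁻¹ x with hw
  have hwB : w ∉ B := by
    intro hcon
    apply hx
    have : f w = x := by rw [hw]; simp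
    rw [← this]
    exact Finset.mem_image_of_mem _ hcon
  obtain ⟨s, t, hst⟩ := hB w hwB
  have hs0 : s ≠ 0 := by
    intro hcon
    rcases Metric.eventually_nhds_iff.mp hst with ⟨ε, hε, hball⟩
    have h1 : f (w + ε / 2) = s * (w + ε / 2) + t := by
      apply hball; rw [Real.dist_eq, show w + ε / 2 - w = ε / 2 by ring,
        abs_of_pos (by linarith)]; linarith
    have h2 : f (w - ε / 2) = s * (w - ε / 2) + t := by
      apply hball; rw [Real.dist_eq, show w - ε / 2 - w = -(ε / 2) by ring, abs_neg,
        abs_of_pos (by linarith)]; linarith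
    rw [hcon] at h1 h2
    simp only [zero_mul, zero_add] at h1 h2
    have := f.injective (h1.trans h2.symm)
    linarith
  refine ⟨1 / s, -(t / s), ?_⟩
  have hx' : x = f w := by rw [hw]; simp
  rw [hx', ← PermAux.map_nhds f hm w, Filter.eventually_map]
  apply hst.mono
  intro z hz
  have hzi : f⁻¹ (f z) = z := by simp
  rw [hzi, hz]
  field_simp
  ring

lemma plbrk_mul (g f : Equiv.Perm ℝ) (hmf : StrictMono ⇑f) (hg : PLBrk g) (hf : PLBrk f) :
    PLBrk (g * f) := by
  obtain ⟨Bg, hBg⟩ := hg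
  obtain ⟨Bf, hBf⟩ := hf
  refine ⟨Bf ∪ Bg.image ⇑f⁻¹, ?_⟩
  intro x hx
  simp only [Finset.mem_union, not_or] at hx
  obtain ⟨hx1, hx2⟩ := hx
  have hfx : f x ∉ Bg := by
    intro hcon
    apply hx2
    have : f⁻¹ (f x) = x := by simp
    rw [← this]
    exact Finset.mem_image_of_mem _ hcon
  obtain ⟨s₁, t₁, h₁⟩ := hBf x hx1
  obtain ⟨s₂, t₂, h₂⟩ := hBg (f x) hfx
  refine ⟨s₂ * s₁, s₂ * t₁ + t₂, ?_⟩
  have hcont : Filter.Tendsto ⇑f (nhds x) (nhds (f x)) :=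
    (PermAux.continuous f hmf).tendsto x
  have h₂' : ∀ᶠ z in nhds x, g (f z) = s₂ * f z + t₂ := hcont.eventually h₂
  apply (h₁.and h₂').mono
  rintro z ⟨hz1, hz2⟩
  rw [Equiv.Perm.mul_apply, hz2, hz1]
  ring

lemma fingap (B : Finset ℝ) (z : ℝ) :
    ∃ δ : ℝ, 0 < δ ∧ ∀ x ∈ Set.Ioo z (z + δ), x ∉ B := by
  classical
  set C := B.filter (fun b => z < b) with hC
  by_cases hne : C.Nonempty
  · refine ⟨C.min' hne - z, ?_, ?_⟩
    · have : z < C.min' hne := (Finset.mem_filter.mp (C.min'_mem hne)).2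
      linarith
    · intro x hx hcon
      have hxC : x ∈ C := Finset.mem_filter.mpr ⟨hcon, hx.1⟩
      have := C.min'_le x hxC
      have := hx.2
      linarith
  · refine ⟨1, one_pos, ?_⟩
    intro x hx hcon
    exact hne ⟨x, Finset.mem_filter.mpr ⟨hcon, hx.1⟩⟩

lemma affine_on (f : ℝ → ℝ) {u v x₀ : ℝ} (hx₀ : x₀ ∈ Set.Ioo u v)
    (h : ∀ x ∈ Set.Ioo u v, ∃ s t : ℝ, ∀ᶠ w in nhds x, f w = s * w + t) :
    ∃ s t : ℝ, ∀ x ∈ Set.Ioo u v, f x = s * x + t := by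
  obtain ⟨s, t, hst⟩ := h x₀ hx₀
  refine ⟨s, t, ?_⟩
  set V₁ := {x : ℝ | ∀ᶠ w in nhds x, f w = s * w + t} with hV₁def
  set V₂ := {x : ℝ | ∃ s' t' : ℝ, ¬(s' = s ∧ t' = t) ∧ ∀ᶠ w in nhds x, f w = s' * w + t'}
    with hV₂def
  have hV₁o : IsOpen V₁ := by
    rw [isOpen_iff_mem_nhds]
    intro x hx
    exact eventually_eventually_nhds.mpr hx
  have hV₂o : IsOpen V₂ := by
    rw [isOpen_iff_mem_nhds]
    intro x hx
    obtain ⟨s', t', hne, hev⟩ := hx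
    have := eventually_eventually_nhds.mpr hev
    apply this.mono
    intro w hw
    exact ⟨s', t', hne, hw⟩
  have hcover : Set.Ioo u v ⊆ V₁ ∪ V₂ := by
    intro x hx
    obtain ⟨s', t', hev⟩ := h x hx
    by_cases hc : s' = s ∧ t' = t
    · left
      rw [hc.1, hc.2] at hev
      exact hev
    · right
      exact ⟨s', t', hc, hev⟩
  have hne1 : (Set.Ioo u v ∩ V₁).Nonempty := ⟨x₀, hx₀, hst⟩
  have hnotV₂ : ∀ x ∈ Set.Ioo u v, x ∉ V₂ := by
    intro x hx hxV₂
    have hinter := isPreconnected_Ioo (a := u) (b := v) V₁ V₂ hV₁o hV₂o hcover hne1 ⟨x, hx, hxV₂⟩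
    obtain ⟨z, _, hz1, hz2⟩ := hinter
    obtain ⟨s', t', hne, hev'⟩ := hz2
    have hcomb : ∀ᶠ w in nhds z, s' * w + t' = s * w + t := by
      apply (hz1.and hev').mono
      rintro w ⟨hw1, hw2⟩
      rw [← hw1, ← hw2]
    exact hne ⟨(affeq hcomb).1, (affeq hcomb).2⟩
  intro x hx
  rcases hcover hx with hx1 | hx2
  · exact hx1.self_of_nhds
  · exact absurd hx2 (hnotV₂ x hx)

lemma acc_right (f : Equiv.Perm ℝ) (hpl : PLBrk f) (z : ℝ)
    (hfix : ∀ r, z < r → ∃ p, p ∈ Set.Ioo z r ∧ f p = p)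
    (hmov : ∀ r, z < r → ∃ p, p ∈ Set.Ioo z r ∧ f p ≠ p) : False := by
  obtain ⟨B, hB⟩ := hpl
  obtain ⟨δ, hδ, hgap⟩ := fingap B z
  have hloc : ∀ x ∈ Set.Ioo z (z + δ), ∃ s t : ℝ, ∀ᶠ w in nhds x, f w = s * w + t :=
    fun x hx => hB x (hgap x hx)
  have hmem : z + δ / 2 ∈ Set.Ioo z (z + δ) := ⟨by linarith, by linarith⟩
  obtain ⟨s, t, haff⟩ := affine_on ⇑f hmem hloc
  obtain ⟨p₁, hp₁, hfp₁⟩ := hfix (z + δ) (by linarith)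
  obtain ⟨p₂, hp₂, hfp₂⟩ := hfix p₁ hp₁.1
  have hp₂' : p₂ ∈ Set.Ioo z (z + δ) := ⟨hp₂.1, lt_trans hp₂.2 hp₁.2⟩
  have e₁ : s * p₁ + t = p₁ := by rw [← haff p₁ hp₁]; exact hfp₁
  have e₂ : s * p₂ + t = p₂ := by rw [← haff p₂ hp₂']; exact hfp₂
  have hs : s = 1 := by
    have hne : p₁ - p₂ ≠ 0 := by
      have := hp₂.2; intro hcon; apply absurd hcon; intro h'; linarith
    have : s * (p₁ - p₂) = 1 * (p₁ - p₂) := by ring_nf; nlinarith [e₁, e₂]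
    exact mul_right_cancel₀ hne this
  have ht : t = 0 := by rw [hs] at e₁; linarith
  obtain ⟨q₀, hq₀, hfq₀⟩ := hmov (z + δ) (by linarith)
  apply hfq₀
  rw [haff q₀ hq₀, hs, ht]
  ring

lemma supacc (f : Equiv.Perm ℝ) (hm : StrictMono ⇑f) (hc : Continuous ⇑f)
    (hpl : PLBrk f) (hlow : ∀ z : ℝ, z ≤ 0 → f z = z) (hhigh : ∀ z : ℝ, 1 ≤ z → f z = z)
    (a : ℝ) (hacc : ∀ r, a < r → ∃ u, u ∈ Set.Ioo a r ∧ f u ≠ u) :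
    ∃ P Q, IsOrbital f P Q ∧ P ≤ a ∧ a < Q := by
  obtain ⟨B, hB⟩ := hpl
  obtain ⟨δ, hδ, hgap⟩ := fingap B a
  have hloc : ∀ x ∈ Set.Ioo a (a + δ), ∃ s t : ℝ, ∀ᶠ w in nhds x, f w = s * w + t :=
    fun x hx => hB x (hgap x hx)
  have hmem : a + δ / 2 ∈ Set.Ioo a (a + δ) := ⟨by linarith, by linarith⟩
  obtain ⟨s, t, haff⟩ := affine_on ⇑f hmem hloc
  -- find δ' ≤ δ such that no fixed points in (a, a+δ')
  have hδ' : ∃ δ' : ℝ, 0 < δ' ∧ δ' ≤ δ ∧ ∀ x ∈ Set.Ioo a (a + δ'), f x ≠ x := by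
    by_cases hs : s = 1
    · by_cases ht : t = 0
      · exfalso
        obtain ⟨u, hu, hfu⟩ := hacc (a + δ) (by linarith)
        exact hfu (by rw [haff u hu, hs, ht]; ring)
      · refine ⟨δ, hδ, le_refl _, ?_⟩
        intro x hx hcon
        rw [haff x hx, hs] at hcon
        apply ht
        linarith
    · set xs := t / (1 - s) with hxs
      have hkey : ∀ x ∈ Set.Ioo a (a + δ), f x = x → x = xs := by
        intro x hx hcon
        rw [haff x hx] at hcon
        rw [hxs]
        field_simp [sub_ne_zero.mpr (Ne.symm hs)]
        linarith
      by_cases hxa : a < xs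
      · refine ⟨min δ (xs - a), lt_min hδ (by linarith), min_le_left _ _, ?_⟩
        intro x hx hcon
        have hx' : x ∈ Set.Ioo a (a + δ) :=
          ⟨hx.1, lt_of_lt_of_le hx.2 (by linarith [min_le_left δ (xs - a)])⟩
        have := hkey x hx' hcon
        have hxlt : x < a + (xs - a) := lt_of_lt_of_le hx.2 (by linarith [min_le_right δ (xs - a)])
        rw [this] at hxlt
        linarith
      · refine ⟨δ, hδ, le_refl _, ?_⟩
        intro x hx hcon
        have := hkey x hx hcon
        push_neg at hxa
        rw [this] at hx
        linarith [hx.1]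
  obtain ⟨δ', hδ'pos, hδ'le, hnofix⟩ := hδ'
  set u := a + δ' / 2 with hu
  have humem : u ∈ Set.Ioo a (a + δ') := ⟨by rw [hu]; linarith, by rw [hu]; linarith⟩
  have hfu : f u ≠ u := hnofix u humem
  obtain ⟨P, Q, horb, huPQ⟩ := orbital_exists f hc hlow hhigh hfu
  refine ⟨P, Q, horb, ?_, lt_trans humem.1 huPQ.2⟩
  by_contra hcon
  push_neg at hcon
  have hPmem : P ∈ Set.Ioo a (a + δ') := ⟨hcon, lt_trans huPQ.1 humem.2⟩
  exact hnofix P hPmem horb.2.2.1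

end PLB


section Arsenal

variable {G : Type*} [Group G]

/-- conjugates `X k = f₀^k f₁ f₀^{-k}` -/
def Xc (f₀ f₁ : G) (k : ℕ) : G := f₀ ^ k * f₁ * (f₀ ^ k)⁻¹

lemma Xc_succ (f₀ f₁ : G) (k : ℕ) : Xc f₀ f₁ (k + 1) = f₀ * Xc f₀ f₁ k * f₀⁻¹ := by
  unfold Xc
  rw [pow_succ']
  simp [mul_assoc, mul_inv_rev]

lemma Xc_conj (f₀ f₁ : G) (k : ℕ) (hk : Commute (f₁⁻¹ * f₀) (Xc f₀ f₁ k)) :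
    f₁ * Xc f₀ f₁ k * f₁⁻¹ = Xc f₀ f₁ (k + 1) := by
  set y := f₁⁻¹ * f₀ with hy
  have e : y * Xc f₀ f₁ k * y⁻¹ = Xc f₀ f₁ k := by
    rw [hk.eq, mul_inv_cancel_right]
  have hf₁y : f₁ * y = f₀ := by rw [hy, mul_inv_cancel_left]
  calc f₁ * Xc f₀ f₁ k * f₁⁻¹ = f₁ * (y * Xc f₀ f₁ k * y⁻¹) * f₁⁻¹ := by rw [e]
    _ = (f₁ * y) * Xc f₀ f₁ k * (f₁ * y)⁻¹ := by group
    _ = f₀ * Xc f₀ f₁ k * f₀⁻¹ := by rw [hf₁y]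
    _ = Xc f₀ f₁ (k + 1) := (Xc_succ f₀ f₁ k).symm

lemma arsenal (f₀ f₁ : G)
    (h1 : Commute (f₁⁻¹ * f₀) (Xc f₀ f₁ 1))
    (h2 : Commute (f₁⁻¹ * f₀) (Xc f₀ f₁ 2)) :
    ∀ k, 1 ≤ k → Commute (f₁⁻¹ * f₀) (Xc f₀ f₁ k) := by
  set y := f₁⁻¹ * f₀ with hy
  have main : ∀ k, Commute y (Xc f₀ f₁ (k + 1)) ∧ Commute y (Xc f₀ f₁ (k + 2)) := by
    intro k
    induction k with
    | zero => exact ⟨h1, h2⟩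
    | succ n ih =>
      obtain ⟨ha, hb⟩ := ih
      refine ⟨hb, ?_⟩
      -- show X (n+3) = X 1 * X (n+2) * (X 1)⁻¹ using ha
      have hconj : f₁ * Xc f₀ f₁ (n + 1) * f₁⁻¹ = Xc f₀ f₁ (n + 2) := Xc_conj f₀ f₁ (n + 1) ha
      have h3 : Xc f₀ f₁ (n + 3) = f₀ * Xc f₀ f₁ (n + 2) * f₀⁻¹ := Xc_succ f₀ f₁ (n + 2)
      have h2' : Xc f₀ f₁ (n + 2) = f₀ * Xc f₀ f₁ (n + 1) * f₀⁻¹ := Xc_succ f₀ f₁ (n + 1)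
      have hX1 : Xc f₀ f₁ 1 = f₀ * f₁ * f₀⁻¹ := by unfold Xc; rw [pow_one]
      have hmid : f₀⁻¹ * Xc f₀ f₁ (n + 2) * f₀ = Xc f₀ f₁ (n + 1) := by rw [h2']; group
      have hE : Xc f₀ f₁ 1 * Xc f₀ f₁ (n + 2) * (Xc f₀ f₁ 1)⁻¹ = Xc f₀ f₁ (n + 3) := by
        calc Xc f₀ f₁ 1 * Xc f₀ f₁ (n + 2) * (Xc f₀ f₁ 1)⁻¹
            = f₀ * (f₁ * (f₀⁻¹ * Xc f₀ f₁ (n + 2) * f₀) * f₁⁻¹) * f₀⁻¹ := by rw [hX1]; group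
          _ = f₀ * (f₁ * Xc f₀ f₁ (n + 1) * f₁⁻¹) * f₀⁻¹ := by rw [hmid]
          _ = f₀ * Xc f₀ f₁ (n + 2) * f₀⁻¹ := by rw [hconj]
          _ = Xc f₀ f₁ (n + 3) := h3.symm
      show Commute y (Xc f₀ f₁ (n + 1 + 2))
      have hnn : n + 1 + 2 = n + 3 := by ring
      rw [hnn, ← hE]
      exact (h1.mul_right hb).mul_right h1.inv_right
  intro k hk
  match k, hk with
  | (k + 1), _ => exact (main k).1

end Arsenal


lemma Ioo_sub_endpoints {p q a c : ℝ} (h : p < q) (hsub : Set.Ioo p q ⊆ Set.Ioo a c) :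
    a ≤ p ∧ q ≤ c := by
  constructor
  · by_contra hcon
    push_neg at hcon
    have hpm : p < min q a := lt_min h hcon
    set w := (p + min q a) / 2 with hw
    have hw1 : p < w := by rw [hw]; linarith
    have hw2 : w < min q a := by rw [hw]; linarith
    have hmem : w ∈ Set.Ioo p q := ⟨hw1, lt_of_lt_of_le hw2 (min_le_left q a)⟩
    have := (hsub hmem).1
    have := lt_of_lt_of_le hw2 (min_le_right q a)
    linarith
  · by_contra hcon
    push_neg at hcon
    have hpm : max p c < q := max_lt h hcon
    set w := (max p c + q) / 2 with hw
    have hw1 : max p c < w := by rw [hw]; linarith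
    have hw2 : w < q := by rw [hw]; linarith
    have hmem : w ∈ Set.Ioo p q := ⟨lt_of_le_of_lt (le_max_left p c) hw1, hw2⟩
    have := (hsub hmem).2
    have := lt_of_le_of_lt (le_max_right p c) hw1
    linarith




/-- Suppose `f₀, f₁ ∈ PL₀(I)` satisfy the two standard relations of Thompson's group
`F`, `(a,c)` is an orbital of `f₀` on which `f₀ x > x` (an up-bump) which is not an
orbital of `f₁`, and `(b 0, d 0) < … < (b n, d n)` is the (complete, increasing)
list of orbitals of `f₁` contained in `(a,c)`.  Then `f₀(b 0) > b n`, i.e. `f₀`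
moves the left endpoint of the first orbital of `f₁` beyond the left endpoint of the
last one. -/
theorem f0_of_first_exceeds_last (f₀ f₁ : Equiv.Perm ℝ)
    (h₀ : IsPL0 f₀) (h₁ : IsPL0 f₁) (hrel : ThompsonRel f₀ f₁) (a c : ℝ)
    (horb₀ : IsOrbital f₀ a c) (hup : ∀ x ∈ Set.Ioo a c, x < f₀ x)
    (hne : ¬ IsOrbital f₁ a c) (n : ℕ) (b d : Fin (n + 1) → ℝ)
    (horbs : ∀ i, IsOrbital f₁ (b i) (d i) ∧ Set.Ioo (b i) (d i) ⊆ Set.Ioo a c)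
    (hmono : StrictMono b)
    (hall : ∀ b' d' : ℝ, IsOrbital f₁ b' d' → Set.Ioo b' d' ⊆ Set.Ioo a c →
      ∃ i, b' = b i ∧ d' = d i) :
    b (Fin.last n) < f₀ (b 0) := by
  classical
  obtain ⟨hrel1, hrel2⟩ := hrel
  obtain ⟨sm₀, hlow₀, hhigh₀, hplb₀⟩ := h₀
  obtain ⟨sm₁, hlow₁, hhigh₁, hplb₁⟩ := h₁
  have hac : a < c := horb₀.1
  have hfa₀ : f₀ a = a := horb₀.2.2.1
  have hfc₀ : f₀ c = c := horb₀.2.2.2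
  set y : Equiv.Perm ℝ := f₁⁻¹ * f₀ with hydef
  have sm_inv₁ : StrictMono ⇑f₁⁻¹ := PermAux.sm_inv f₁ sm₁
  have smy : StrictMono ⇑y := PermAux.sm_mul _ _ sm_inv₁ sm₀
  have smyinv : StrictMono ⇑y⁻¹ := PermAux.sm_inv y smy
  have cont₀ : Continuous ⇑f₀ := PermAux.continuous f₀ sm₀
  have cont₁ : Continuous ⇑f₁ := PermAux.continuous f₁ sm₁
  have hplb₀' : PLBrk f₀ := hplb₀
  have hplb₁' : PLBrk f₁ := hplb₁
  have hplby : PLBrk y := plbrk_mul f₁⁻¹ f₀ sm₀ (plbrk_inv f₁ sm₁ hplb₁') hplb₀'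
  -- the conjugates X k and commutation relations
  have smX : ∀ k, StrictMono ⇑(Xc f₀ f₁ k) := fun k =>
    PermAux.sm_mul _ _ (PermAux.sm_mul _ _ (PermAux.sm_pow f₀ sm₀ k) sm₁)
      (PermAux.sm_inv _ (PermAux.sm_pow f₀ sm₀ k))
  have hcomm : ∀ k, 1 ≤ k → Commute y (Xc f₀ f₁ k) := by
    apply arsenal
    · have h := commutatorElement_eq_one_iff_commute.mp hrel1
      have hX1 : Xc f₀ f₁ 1 = f₀ * f₁ * f₀⁻¹ := by unfold Xc; rw [pow_one]
      rw [hX1]; exact h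
    · have h := commutatorElement_eq_one_iff_commute.mp hrel2
      have hX2 : Xc f₀ f₁ 2 = f₀ ^ 2 * f₁ * (f₀ ^ 2)⁻¹ := rfl
      rw [hX2]; exact h
  have hconjy : ∀ k, 1 ≤ k → y * Xc f₀ f₁ k * y⁻¹ = Xc f₀ f₁ k := fun k hk => by
    rw [(hcomm k hk).eq, mul_inv_cancel_right]
  -- basic dynamics of f₀ on (a,c)
  have hIoo : ∀ x ∈ Set.Ioo a c, f₀ x ∈ Set.Ioo a c := fun x hx =>
    orbital_maps f₀ horb₀ sm₀ hx
  have hpowIoo : ∀ (k : ℕ) (x : ℝ), x ∈ Set.Ioo a c → (f₀ ^ k) x ∈ Set.Ioo a c := by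
    intro k
    induction k with
    | zero => intro x hx; simpa using hx
    | succ m ih =>
      intro x hx
      rw [pow_succ, Equiv.Perm.mul_apply]
      exact ih _ (hIoo x hx)
  have hpowfix_a : ∀ k : ℕ, (f₀ ^ k) a = a := by
    intro k
    induction k with
    | zero => simp
    | succ m ih => rw [pow_succ, Equiv.Perm.mul_apply, hfa₀, ih]
  have hpowfix_c : ∀ k : ℕ, (f₀ ^ k) c = c := by
    intro k
    induction k with
    | zero => simp
    | succ m ih => rw [pow_succ, Equiv.Perm.mul_apply, hfc₀, ih]
  have hgtc : ∀ (m : ℕ) (z : ℝ), c < z → c < (f₀ ^ m) z := by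
    intro m
    induction m with
    | zero => intro z hz; simpa using hz
    | succ mm ih =>
      intro z hz
      rw [pow_succ, Equiv.Perm.mul_apply]
      apply ih
      rw [← hfc₀]
      exact sm₀ hz
  -- THE KILL LEMMA --
  have kill : ∀ π κ : ℝ, IsOrbital f₁ π κ → π ≤ a → a < κ → κ < c → False := by
    intro π κ horbW hπa haκ hκc
    have hκIoo : κ ∈ Set.Ioo a c := ⟨haκ, hκc⟩
    have hf₀κ : f₀ κ ∈ Set.Ioo a c := hIoo κ hκIoo
    have hκlt : κ < f₀ κ := hup κ hκIoo
    have hκlt2 : f₀ κ < f₀ (f₀ κ) := hup _ hf₀κ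
    have hf₀π : f₀ π ≤ a := by
      calc f₀ π ≤ f₀ a := sm₀.monotone hπa
        _ = a := hfa₀
    have hf₀f₀π : f₀ (f₀ π) ≤ a := by
      calc f₀ (f₀ π) ≤ f₀ a := sm₀.monotone hf₀π
        _ = a := hfa₀
    have hX1eq : Xc f₀ f₁ 1 = f₀ * f₁ * f₀⁻¹ := by unfold Xc; rw [pow_one]
    have horbW1 : IsOrbital (Xc f₀ f₁ 1) (f₀ π) (f₀ κ) := by
      rw [hX1eq]; exact orbital_conj f₀ f₁ sm₀ horbW
    have horbW2 : IsOrbital (Xc f₀ f₁ 2) (f₀ (f₀ π)) (f₀ (f₀ κ)) := by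
      have h := orbital_conj f₀ (Xc f₀ f₁ 1) sm₀ horbW1
      rwa [← Xc_succ f₀ f₁ 1] at h
    have hc1 : Commute y (Xc f₀ f₁ 1) := hcomm 1 le_rfl
    have hc2 : Commute y (Xc f₀ f₁ 2) := hcomm 2 (by norm_num)
    have horbF : IsOrbital (Xc f₀ f₁ 2) (f₁ (f₀ π)) (f₁ (f₀ κ)) := by
      have h := orbital_conj f₁ (Xc f₀ f₁ 1) sm₁ horbW1
      rwa [Xc_conj f₀ f₁ 1 hc1] at h
    have hf₁a : f₁ a < κ := by
      rcases lt_or_eq_of_le hπa with hlt | heq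
      · exact (orbital_maps f₁ horbW sm₁ ⟨hlt, haκ⟩).2
      · rw [← heq, horbW.2.2.1]
        exact horbW.1
    set ρ := (max a (f₁ a) + κ) / 2 with hρ
    have hmax : max a (f₁ a) < κ := max_lt haκ hf₁a
    have hρ1 : max a (f₁ a) < ρ := by rw [hρ]; linarith
    have hρκ : ρ < κ := by rw [hρ]; linarith
    have hρa : a < ρ := lt_of_le_of_lt (le_max_left _ _) hρ1
    have hρF : ρ ∈ Set.Ioo (f₁ (f₀ π)) (f₁ (f₀ κ)) := by
      constructor
      · calc f₁ (f₀ π) ≤ f₁ a := sm₁.monotone hf₀π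
          _ ≤ max a (f₁ a) := le_max_right _ _
          _ < ρ := hρ1
      · calc ρ < κ := hρκ
          _ = f₁ κ := horbW.2.2.2.symm
          _ < f₁ (f₀ κ) := sm₁ hκlt
    have hρW2 : ρ ∈ Set.Ioo (f₀ (f₀ π)) (f₀ (f₀ κ)) := by
      constructor
      · exact lt_of_le_of_lt hf₀f₀π hρa
      · calc ρ < κ := hρκ
          _ < f₀ κ := hκlt
          _ < f₀ (f₀ κ) := hκlt2
    have heqs := orbital_eq (Xc f₀ f₁ 2) horbF horbW2 hρF hρW2
    have hkey : f₁ (f₀ κ) = f₀ (f₀ κ) := heqs.2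
    -- crush
    have hye : y (f₀ κ) = f₀ κ := by
      show f₁⁻¹ (f₀ (f₀ κ)) = f₀ κ
      rw [← hkey]
      simp
    have hyκ : y κ ≠ κ := by
      intro hcon
      have h1 : f₁⁻¹ (f₀ κ) = κ := hcon
      have h2 := congrArg ⇑f₁ h1
      simp only [Equiv.Perm.inv_def, Equiv.apply_symm_apply] at h2
      rw [horbW.2.2.2] at h2
      exact (ne_of_gt hκlt) h2
    have he_int : f₀ κ ∈ Set.Ioo (f₀ (f₀ π)) (f₀ (f₀ κ)) :=
      ⟨lt_of_le_of_lt hf₀f₀π (lt_trans haκ hκlt), hκlt2⟩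
    have hκ_int : κ ∈ Set.Ioo (f₀ (f₀ π)) (f₀ (f₀ κ)) :=
      ⟨lt_of_le_of_lt hf₀f₀π haκ, lt_trans hκlt hκlt2⟩
    have hX2moves : Xc f₀ f₁ 2 (f₀ κ) ≠ f₀ κ := horbW2.2.1 he_int
    obtain ⟨v, hvorb, hvcomm, hsmv, hve⟩ :
        ∃ v : Equiv.Perm ℝ, IsOrbital v (f₀ (f₀ π)) (f₀ (f₀ κ)) ∧ Commute y v ∧
          StrictMono ⇑v ∧ v (f₀ κ) < f₀ κ := by
      rcases lt_or_gt_of_ne hX2moves with hlt | hgt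
      · exact ⟨Xc f₀ f₁ 2, horbW2, hc2, smX 2, hlt⟩
      · refine ⟨(Xc f₀ f₁ 2)⁻¹, orbital_inv _ horbW2, hc2.inv_right,
          PermAux.sm_inv _ (smX 2), ?_⟩
        have h := (PermAux.sm_inv _ (smX 2)) hgt
        simpa using h
    have hcontv : Continuous ⇑v := PermAux.continuous v hsmv
    have hvdown : ∀ x ∈ Set.Ioo (f₀ (f₀ π)) (f₀ (f₀ κ)), v x < x :=
      orbital_down v hcontv hvorb he_int hve
    have hcommit : ∀ (k : ℕ) (x : ℝ), y ((⇑v)^[k] x) = (⇑v)^[k] (y x) := by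
      intro k
      induction k with
      | zero => intro x; simp
      | succ m ih =>
        intro x
        rw [Function.iterate_succ_apply', Function.iterate_succ_apply', ← ih x]
        have h := hvcomm.eq
        calc y (v ((⇑v)^[m] x)) = (y * v) ((⇑v)^[m] x) := rfl
          _ = (v * y) ((⇑v)^[m] x) := by rw [h]
          _ = v (y ((⇑v)^[m] x)) := rfl
    obtain ⟨hvin_e, hvlim_e⟩ := iter_down v hsmv hcontv hvorb hvdown he_int
    obtain ⟨hvin_κ, hvlim_κ⟩ := iter_down v hsmv hcontv hvorb hvdown hκ_int
    apply acc_right y hplby (f₀ (f₀ π))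
    · intro r hr
      obtain ⟨k, hk⟩ := hvlim_e r hr
      exact ⟨(⇑v)^[k] (f₀ κ), ⟨(hvin_e k).1, hk⟩, by rw [hcommit k (f₀ κ), hye]⟩
    · intro r hr
      obtain ⟨k, hk⟩ := hvlim_κ r hr
      refine ⟨(⇑v)^[k] κ, ⟨(hvin_κ k).1, hk⟩, ?_⟩
      rw [hcommit k κ]
      intro hcon
      exact hyκ (Function.Injective.iterate v.injective k hcon)
  -- basic data about the orbitals (b i, d i)
  have hIoosub : ∀ i, a ≤ b i ∧ d i ≤ c := fun i =>
    Ioo_sub_endpoints (horbs i).1.1 (horbs i).2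
  have hb0a : a ≤ b 0 := (hIoosub 0).1
  have hd0c : d 0 ≤ c := (hIoosub 0).2
  have hb0d0 : b 0 < d 0 := (horbs 0).1.1
  have hb0c : b 0 < c := lt_of_lt_of_le hb0d0 hd0c
  -- step (I): b 0 > a
  have hb0gt : a < b 0 := by
    rcases lt_or_eq_of_le hb0a with h | h
    · exact h
    · exfalso
      have horb' : IsOrbital f₁ a (d 0) := by rw [h]; exact (horbs 0).1
      have hd0lt : d 0 < c := by
        rcases lt_or_eq_of_le hd0c with h' | h'
        · exact h'
        · exfalso
          apply hne
          rw [← h']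
          exact horb'
      exact kill a (d 0) horb' le_rfl (by rw [h]; exact hb0d0) hd0lt
  have hb0Ioo : b 0 ∈ Set.Ioo a c := ⟨hb0gt, hb0c⟩
  -- step (II): f₁ a = a
  have hfa₁ : f₁ a = a := by
    by_contra hcon
    obtain ⟨π₀, κ₀, horbA, haA⟩ := orbital_exists f₁ cont₁ hlow₁ hhigh₁ hcon
    have hκ₀b : κ₀ ≤ b 0 := by
      by_contra hc2
      push_neg at hc2
      have hmem : b 0 ∈ Set.Ioo π₀ κ₀ := ⟨lt_trans haA.1 hb0gt, hc2⟩
      exact (horbA.2.1 hmem) ((horbs 0).1.2.2.1)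
    exact kill π₀ κ₀ horbA (le_of_lt haA.1) haA.2 (lt_of_le_of_lt hκ₀b hb0c)
  -- step (III): f₁ c = c
  have hfc₁ : f₁ c = c := by
    by_contra hcon
    obtain ⟨p, q, horbC, hcC⟩ := orbital_exists f₁ cont₁ hlow₁ hhigh₁ hcon
    have hd0p : d 0 ≤ p := by
      by_contra hc2
      push_neg at hc2
      have hmem : d 0 ∈ Set.Ioo p q := ⟨hc2, lt_of_le_of_lt hd0c hcC.2⟩
      exact (horbC.2.1 hmem) ((horbs 0).1.2.2.2)
    have hap : a < p := lt_of_lt_of_le (lt_trans hb0gt hb0d0) hd0p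
    have hpIoo : p ∈ Set.Ioo a c := ⟨hap, hcC.1⟩
    have hWm : ∀ m : ℕ, 1 ≤ m → IsOrbital (Xc f₀ f₁ m) ((f₀ ^ m) p) ((f₀ ^ m) q) := by
      intro m _
      exact orbital_conj (f₀ ^ m) f₁ (PermAux.sm_pow f₀ sm₀ m) horbC
    have hcmem : ∀ m : ℕ, 1 ≤ m → c ∈ Set.Ioo ((f₀ ^ m) p) ((f₀ ^ m) q) :=
      fun m hm => ⟨(hpowIoo m p hpIoo).2, hgtc m q hcC.2⟩
    set ξ := f₁⁻¹ c with hξ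
    have hξmem : ξ ∈ Set.Ioo p q := orbital_maps f₁⁻¹ (orbital_inv f₁ horbC) sm_inv₁ hcC
    have hf₁ξ : f₁ ξ = c := by rw [hξ]; simp
    have hξne : ξ ≠ c := by
      intro h
      apply hcon
      calc f₁ c = f₁ ξ := by rw [h]
        _ = c := hf₁ξ
    have haccum : ∀ r, a < r → ∃ u, u ∈ Set.Ioo a r ∧ f₁ u ≠ u := by
      obtain ⟨ξ', hξ'mem, hξ'prop⟩ :
          ∃ ξ', ξ' ∈ Set.Ioo a c ∧ ∀ m : ℕ, 2 ≤ m → f₁ ((f₀ ^ m)⁻¹ ξ') ≠ (f₀ ^ m)⁻¹ ξ' := by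
        rcases lt_or_gt_of_ne hξne with hlt | hgt
        · refine ⟨ξ, ⟨lt_trans hap hξmem.1, hlt⟩, ?_⟩
          intro m hm
          have hm1 : 1 ≤ m := le_trans one_le_two hm
          have horbYW : IsOrbital (Xc f₀ f₁ m) (y ((f₀ ^ m) p)) (y ((f₀ ^ m) q)) := by
            have h := orbital_conj y (Xc f₀ f₁ m) smy (hWm m hm1)
            rwa [hconjy m hm1] at h
          have hyc : y c = ξ := by
            show f₁⁻¹ (f₀ c) = ξ
            rw [hfc₀]
          have hξin : ξ ∈ Set.Ioo (y ((f₀ ^ m) p)) (y ((f₀ ^ m) q)) := by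
            have hc' := hcmem m hm1
            exact ⟨by rw [← hyc]; exact smy hc'.1, by rw [← hyc]; exact smy hc'.2⟩
          have hmoved : (Xc f₀ f₁ m) ξ ≠ ξ := horbYW.2.1 hξin
          intro hfix
          apply hmoved
          show (f₀ ^ m) (f₁ ((f₀ ^ m)⁻¹ ξ)) = ξ
          rw [hfix]
          simp
        · have hζlt : f₁ c < c := by
            have h := sm₁ hgt
            rw [hf₁ξ] at h
            exact h
          set ζ := f₁ c with hζ
          have hζmem : ζ ∈ Set.Ioo p q := orbital_maps f₁ horbC sm₁ hcC
          refine ⟨ζ, ⟨lt_trans hap hζmem.1, hζlt⟩, ?_⟩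
          intro m hm
          obtain ⟨mm, rfl⟩ : ∃ mm, m = mm + 1 := ⟨m - 1, by omega⟩
          have hmm1 : 1 ≤ mm := by omega
          have horbF' : IsOrbital (Xc f₀ f₁ (mm + 1)) (f₁ ((f₀ ^ mm) p)) (f₁ ((f₀ ^ mm) q)) := by
            have h := orbital_conj f₁ (Xc f₀ f₁ mm) sm₁ (hWm mm hmm1)
            rwa [Xc_conj f₀ f₁ mm (hcomm mm hmm1)] at h
          have hζin : ζ ∈ Set.Ioo (f₁ ((f₀ ^ mm) p)) (f₁ ((f₀ ^ mm) q)) := by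
            have hc' := hcmem mm hmm1
            exact ⟨sm₁ hc'.1, sm₁ hc'.2⟩
          have hmoved : (Xc f₀ f₁ (mm + 1)) ζ ≠ ζ := horbF'.2.1 hζin
          intro hfix
          apply hmoved
          show (f₀ ^ (mm + 1)) (f₁ ((f₀ ^ (mm + 1))⁻¹ ζ)) = ζ
          rw [hfix]
          simp
      intro r hr
      have horbinv : IsOrbital f₀⁻¹ a c := orbital_inv f₀ horb₀
      have sminv₀ : StrictMono ⇑f₀⁻¹ := PermAux.sm_inv f₀ sm₀
      have hdir : ∀ x ∈ Set.Ioo a c, f₀⁻¹ x < x := by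
        intro x hx
        have hmem : f₀⁻¹ x ∈ Set.Ioo a c := orbital_maps f₀⁻¹ horbinv sminv₀ hx
        have h2 := hup _ hmem
        simpa using h2
      obtain ⟨hin, hlim⟩ := iter_down f₀⁻¹ sminv₀ (PermAux.continuous _ sminv₀) horbinv hdir hξ'mem
      obtain ⟨k, hk⟩ := hlim r hr
      have hanti : Antitone fun m => (⇑f₀⁻¹)^[m] ξ' := by
        apply antitone_nat_of_succ_le
        intro m
        rw [Function.iterate_succ_apply']
        exact (hdir _ (hin m)).le
      set K := max k 2 with hK
      have hKlt : (⇑f₀⁻¹)^[K] ξ' < r := lt_of_le_of_lt (hanti (le_max_left k 2)) hk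
      have hiter_eq : (⇑f₀⁻¹)^[K] ξ' = (f₀ ^ K)⁻¹ ξ' := by
        rw [← inv_pow, PermAux.pow_apply]
      refine ⟨(⇑f₀⁻¹)^[K] ξ', ⟨(hin K).1, hKlt⟩, ?_⟩
      rw [hiter_eq]
      exact hξ'prop K (le_max_right k 2)
    obtain ⟨P', Q', horbP, hP'a, haQ'⟩ := supacc f₁ sm₁ cont₁ hplb₁' hlow₁ hhigh₁ a haccum
    have hQ'b : Q' ≤ b 0 := by
      by_contra hc2
      push_neg at hc2
      have hmem : b 0 ∈ Set.Ioo P' Q' := ⟨lt_of_le_of_lt hP'a hb0gt, hc2⟩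
      exact (horbP.2.1 hmem) ((horbs 0).1.2.2.1)
    exact kill P' Q' horbP hP'a haQ' (lt_of_le_of_lt hQ'b hb0c)
  -- y fixes a and c
  have hfa₁inv : f₁⁻¹ a = a := by
    have h := congrArg ⇑f₁⁻¹ hfa₁
    simpa using h.symm
  have hfc₁inv : f₁⁻¹ c = c := by
    have h := congrArg ⇑f₁⁻¹ hfc₁
    simpa using h.symm
  have hya : y a = a := by
    show f₁⁻¹ (f₀ a) = a
    rw [hfa₀, hfa₁inv]
  have hyc : y c = c := by
    show f₁⁻¹ (f₀ c) = c
    rw [hfc₀, hfc₁inv]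
  have hyainv : y⁻¹ a = a := by
    have h := congrArg ⇑y⁻¹ hya
    simpa using h.symm
  have hycinv : y⁻¹ c = c := by
    have h := congrArg ⇑y⁻¹ hyc
    simpa using h.symm
  -- the main identities f₁ (f₀^k b₀) = f₀^{k+1} b₀
  have hfixid : ∀ k : ℕ, 1 ≤ k → f₁ ((f₀ ^ k) (b 0)) = (f₀ ^ (k + 1)) (b 0) := by
    intro k hk
    have horbk : ∀ i, IsOrbital (Xc f₀ f₁ k) ((f₀ ^ k) (b i)) ((f₀ ^ k) (d i)) := fun i =>
      orbital_conj (f₀ ^ k) f₁ (PermAux.sm_pow f₀ sm₀ k) (horbs i).1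
    have hpowinv_a : (f₀ ^ k)⁻¹ a = a := by
      have h := congrArg ⇑(f₀ ^ k)⁻¹ (hpowfix_a k)
      simpa using h.symm
    have hpowinv_c : (f₀ ^ k)⁻¹ c = c := by
      have h := congrArg ⇑(f₀ ^ k)⁻¹ (hpowfix_c k)
      simpa using h.symm
    have hd0pow : (f₀ ^ k) (d 0) ≤ c := by
      rcases lt_or_eq_of_le hd0c with h' | h'
      · exact le_of_lt (hpowIoo k _ ⟨lt_trans hb0gt hb0d0, h'⟩).2
      · rw [h', hpowfix_c k]
    have hkeymap : ∀ z : Equiv.Perm ℝ, StrictMono ⇑z → z * Xc f₀ f₁ k * z⁻¹ = Xc f₀ f₁ k →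
        z a = a → z c = c → ∃ j : Fin (n + 1), z ((f₀ ^ k) (b 0)) = (f₀ ^ k) (b j) := by
      intro z hsmz hzconj hza hzc
      have horbimg : IsOrbital (Xc f₀ f₁ k) (z ((f₀ ^ k) (b 0))) (z ((f₀ ^ k) (d 0))) := by
        have h := orbital_conj z (Xc f₀ f₁ k) hsmz (horbk 0)
        rwa [hzconj] at h
      have hpull : IsOrbital f₁ ((f₀ ^ k)⁻¹ (z ((f₀ ^ k) (b 0))))
          ((f₀ ^ k)⁻¹ (z ((f₀ ^ k) (d 0)))) := by
        have h := orbital_conj (f₀ ^ k)⁻¹ (Xc f₀ f₁ k)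
          (PermAux.sm_inv _ (PermAux.sm_pow f₀ sm₀ k)) horbimg
        have hXc : (f₀ ^ k)⁻¹ * Xc f₀ f₁ k * ((f₀ ^ k)⁻¹)⁻¹ = f₁ := by
          show (f₀ ^ k)⁻¹ * (f₀ ^ k * f₁ * (f₀ ^ k)⁻¹) * ((f₀ ^ k)⁻¹)⁻¹ = f₁
          group
        rwa [hXc] at h
      have hsub : Set.Ioo ((f₀ ^ k)⁻¹ (z ((f₀ ^ k) (b 0))))
          ((f₀ ^ k)⁻¹ (z ((f₀ ^ k) (d 0)))) ⊆ Set.Ioo a c := by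
        apply Set.Ioo_subset_Ioo
        · have hmem := hpowIoo k (b 0) hb0Ioo
          have h1 : a < z ((f₀ ^ k) (b 0)) := by
            rw [← hza]; exact hsmz hmem.1
          have h2 : a < (f₀ ^ k)⁻¹ (z ((f₀ ^ k) (b 0))) := by
            rw [← hpowinv_a]
            exact (PermAux.sm_inv _ (PermAux.sm_pow f₀ sm₀ k)) h1
          exact le_of_lt h2
        · have h1 : z ((f₀ ^ k) (d 0)) ≤ c := by
            calc z ((f₀ ^ k) (d 0)) ≤ z c := hsmz.monotone hd0pow
              _ = c := hzc
          calc (f₀ ^ k)⁻¹ (z ((f₀ ^ k) (d 0))) ≤ (f₀ ^ k)⁻¹ c :=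
                (PermAux.sm_inv _ (PermAux.sm_pow f₀ sm₀ k)).monotone h1
            _ = c := hpowinv_c
      obtain ⟨j, hj1, _⟩ := hall _ _ hpull hsub
      refine ⟨j, ?_⟩
      have h := congrArg ⇑(f₀ ^ k) hj1
      simpa using h
    have hyconj : y * Xc f₀ f₁ k * y⁻¹ = Xc f₀ f₁ k := hconjy k hk
    have hyinvconj : y⁻¹ * Xc f₀ f₁ k * (y⁻¹)⁻¹ = Xc f₀ f₁ k := by
      rw [(hcomm k hk).inv_left.eq, mul_inv_cancel_right]
    obtain ⟨j, hj⟩ := hkeymap y smy hyconj hya hyc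
    obtain ⟨j', hj'⟩ := hkeymap y⁻¹ smyinv hyinvconj hyainv hycinv
    have hyfix : y ((f₀ ^ k) (b 0)) = (f₀ ^ k) (b 0) := by
      by_cases hj0 : j = 0
      · rw [hj0] at hj; exact hj
      · exfalso
        have hbj : b 0 < b j := hmono (Fin.pos_of_ne_zero hj0)
        have hgt1 : (f₀ ^ k) (b 0) < y ((f₀ ^ k) (b 0)) := by
          rw [hj]; exact (PermAux.sm_pow f₀ sm₀ k) hbj
        by_cases hj'0 : j' = 0
        · rw [hj'0] at hj'
          have h : y ((f₀ ^ k) (b 0)) = (f₀ ^ k) (b 0) := by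
            have h2 := congrArg ⇑y hj'
            exact (by simpa using h2 : (f₀ ^ k) (b 0) = y ((f₀ ^ k) (b 0))).symm
          rw [h] at hgt1
          exact lt_irrefl _ hgt1
        · have hbj' : b 0 < b j' := hmono (Fin.pos_of_ne_zero hj'0)
          have h1 : (f₀ ^ k) (b 0) < (f₀ ^ k) (b j') := (PermAux.sm_pow f₀ sm₀ k) hbj'
          have h2 : y ((f₀ ^ k) (b j')) = (f₀ ^ k) (b 0) := by
            have h3 := congrArg ⇑y hj'
            exact (by simpa using h3 : (f₀ ^ k) (b 0) = y ((f₀ ^ k) (b j'))).symm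
          have h3 : y ((f₀ ^ k) (b 0)) < y ((f₀ ^ k) (b j')) := smy h1
          rw [h2] at h3
          linarith
    have hyfix' : f₁⁻¹ (f₀ ((f₀ ^ k) (b 0))) = (f₀ ^ k) (b 0) := hyfix
    have h := congrArg ⇑f₁ hyfix'
    simp only [Equiv.Perm.inv_def, Equiv.apply_symm_apply] at h
    rw [← h, pow_succ', Equiv.Perm.mul_apply]
  -- conclusion
  have hmoved1 : f₁ (f₀ (b 0)) ≠ f₀ (b 0) := by
    have h1 := hfixid 1 le_rfl
    rw [pow_one] at h1
    rw [h1]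
    have h2 : (f₀ ^ 2) (b 0) = f₀ (f₀ (b 0)) := by
      rw [pow_two, Equiv.Perm.mul_apply]
    rw [h2]
    exact ne_of_gt (hup _ (hIoo _ hb0Ioo))
  obtain ⟨p, q, horbω, hx1⟩ := orbital_exists f₁ cont₁ hlow₁ hhigh₁ hmoved1
  have hinω : ∀ k : ℕ, 1 ≤ k → (f₀ ^ k) (b 0) ∈ Set.Ioo p q := by
    intro k
    induction k with
    | zero => intro h; omega
    | succ m ih =>
      intro _
      by_cases hm : 1 ≤ m
      · have h2 := hfixid m hm
        have h3 := orbital_maps f₁ horbω sm₁ (ih hm)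
        rw [h2] at h3
        exact h3
      · have hm0 : m = 0 := by omega
        subst hm0
        rw [pow_one]
        exact hx1
  have hf₀b0 : f₀ (b 0) ∈ Set.Ioo a c := hIoo _ hb0Ioo
  have hqc : q = c := by
    have hqle : q ≤ c := by
      by_contra hc2
      push_neg at hc2
      have hmem : c ∈ Set.Ioo p q := ⟨lt_trans hx1.1 hf₀b0.2, hc2⟩
      exact (horbω.2.1 hmem) hfc₁
    have hqge : c ≤ q := by
      by_contra hc2
      push_neg at hc2
      obtain ⟨_, hlim⟩ := iter_up f₀ sm₀ cont₀ horb₀ hup hb0Ioo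
      obtain ⟨k, hk⟩ := hlim (max q (b 0)) (max_lt hc2 hb0c)
      have hk1 : 1 ≤ k := by
        rcases Nat.eq_zero_or_pos k with h0 | h1
        · subst h0
          simp only [Function.iterate_zero_apply] at hk
          exact absurd hk (not_lt.mpr (le_max_right q (b 0)))
        · exact h1
      have hiter : (⇑f₀)^[k] (b 0) = (f₀ ^ k) (b 0) := (PermAux.pow_apply f₀ k (b 0)).symm
      rw [hiter] at hk
      have hlt := (hinω k hk1).2
      have hle := le_max_left q (b 0)
      linarith
    linarith
  have hpa : a ≤ p := by
    by_contra hc2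
    push_neg at hc2
    have hmem : a ∈ Set.Ioo p q := ⟨hc2, by rw [hqc]; exact hac⟩
    exact (horbω.2.1 hmem) hfa₁
  obtain ⟨j, hj1, hj2⟩ := hall p q horbω
    (by rw [hqc]; exact Set.Ioo_subset_Ioo hpa (le_refl c))
  have hjlast : j = Fin.last n := by
    by_contra hc2
    have hjlt : j < Fin.last n := lt_of_le_of_ne (Fin.le_last j) hc2
    have hbjlt : b j < b (Fin.last n) := hmono hjlt
    have hmem : b (Fin.last n) ∈ Set.Ioo p q := by
      constructor
      · rw [hj1]; exact hbjlt
      · rw [hqc]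
        exact lt_of_lt_of_le (horbs (Fin.last n)).1.1 (hIoosub (Fin.last n)).2
    exact (horbω.2.1 hmem) ((horbs (Fin.last n)).1.2.2.1)
  rw [← hjlast, ← hj1]
  exact hx1.1
end
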